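/- arXiv:1411.2894 — 12 statements merged into one kernel-verified Lean document; each statement's English description precedes it below -/
import Mathlib

section
/- Let i_L, v_C : ℝ → ℝ be differentiable functions satisfying L·i_L'(t) = v_S(t) − v_C(t) − R_L·i_L(t) and C·v_C'(t) = i_L(t) − v_C(t)/R_C for all t, where L, C, R_L, R_C > 0. Define P̃(i,v) = (R_C/2)·(v/R_C − i)² + ((R_L + R_C)/2)·i². Then for all t: −L·i_L'(t) + 2·R_C·C·v_C'(t) = (∂P̃/∂i)(i_L(t), v_C(t)) − v_S(t) and −C·v_C'(t) = (∂P̃/∂v)(i_L(t), v_C(t)), where ∂P̃/∂i = −(v − R_C·i) + (R_L + R_C)·i and ∂P̃/∂v = v/R_C − i. (That is, (Ã, P̃) with Ã = [[−L, 2R_C·C],[0, −C]] is an admissible pair reproducing the circuit dynamics.) -/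
/-- The Brayton–Moser admissible pair `(Ã, P̃)` with
`Ã = [[−L, 2R_C·C],[0, −C]]` and
`P̃(i,v) = (R_C/2)(v/R_C − i)² + ((R_L+R_C)/2) i²` reproduces the RLC circuit
dynamics: `−L·i_L' + 2R_C·C·v_C' = ∂P̃/∂i − v_S` and `−C·v_C' = ∂P̃/∂v`,
where `∂P̃/∂i = −(v − R_C i) + (R_L + R_C) i` and `∂P̃/∂v = v/R_C − i`. -/
theorem rlc_admissible_pair (L C R_L R_C : ℝ) (v_S i_L v_C : ℝ → ℝ)
    (hL : 0 < L) (hC : 0 < C) (hRL : 0 < R_L) (hRC : 0 < R_C)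
    (hiL : Differentiable ℝ i_L) (hvC : Differentiable ℝ v_C)
    (heq1 : ∀ t, L * deriv i_L t = v_S t - v_C t - R_L * i_L t)
    (heq2 : ∀ t, C * deriv v_C t = i_L t - v_C t / R_C) :
    ∀ t, (-L * deriv i_L t + 2 * R_C * C * deriv v_C t =
            (-(v_C t - R_C * i_L t) + (R_L + R_C) * i_L t) - v_S t)
       ∧ (-C * deriv v_C t = v_C t / R_C - i_L t) := by
  intro t
  have h1 := heq1 t
  have h2 := heq2 t
  constructor
  · have : R_C * (C * deriv v_C t) = R_C * (i_L t - v_C t / R_C) := by rw [h2]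
    field_simp at this ⊢
    nlinarith [this]
  · linarith
end

section
/- Let i_L, v_C : ℝ → ℝ be differentiable and satisfy L·i_L'(t) = v_S(t) − v_C(t) − R_L·i_L(t) and C·v_C'(t) = i_L(t) − v_C(t)/R_C for all t, where L, C, R_L, R_C > 0 and L ≥ R_C²·C. Define P̃(i,v) = (R_C/2)·(v/R_C − i)² + ((R_L + R_C)/2)·i². Then for all t, the derivative of t ↦ P̃(i_L(t), v_C(t)) satisfies (d/dt) P̃(i_L(t), v_C(t)) ≤ v_S(t)·i_L'(t); i.e., the circuit is passive with storage function P̃ and port variables the source voltage and the time-derivative of the inductor current. -/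
/-- With `L ≥ R_C²·C`, the RLC circuit is passive with storage
function `P̃(i,v) = (R_C/2)(v/R_C − i)² + ((R_L+R_C)/2) i²` and port variables
the source voltage and the time-derivative of the inductor current:
`(d/dt) P̃(i_L(t), v_C(t)) ≤ v_S(t)·i_L'(t)`. -/
theorem rlc_passivity (L C R_L R_C : ℝ) (v_S i_L v_C : ℝ → ℝ)
    (hL : 0 < L) (hC : 0 < C) (hRL : 0 < R_L) (hRC : 0 < R_C)
    (hLC : L ≥ R_C ^ 2 * C)
    (hiL : Differentiable ℝ i_L) (hvC : Differentiable ℝ v_C)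
    (heq1 : ∀ t, L * deriv i_L t = v_S t - v_C t - R_L * i_L t)
    (heq2 : ∀ t, C * deriv v_C t = i_L t - v_C t / R_C) :
    ∀ t, deriv (fun τ => R_C / 2 * (v_C τ / R_C - i_L τ) ^ 2
            + (R_L + R_C) / 2 * (i_L τ) ^ 2) t
          ≤ v_S t * deriv i_L t := by
  intro t
  set i' := deriv i_L t with hi'
  set v' := deriv v_C t with hv'
  have h1 : HasDerivAt (fun τ => v_C τ / R_C - i_L τ) (v' / R_C - i') t :=
    ((hvC t).hasDerivAt.div_const R_C).sub (hiL t).hasDerivAt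
  have H : HasDerivAt (fun τ => R_C / 2 * (v_C τ / R_C - i_L τ) ^ 2
      + (R_L + R_C) / 2 * (i_L τ) ^ 2)
      (R_C / 2 * ((2 : ℕ) * (v_C t / R_C - i_L t) ^ 1 * (v' / R_C - i'))
        + (R_L + R_C) / 2 * ((2 : ℕ) * (i_L t) ^ 1 * i')) t :=
    ((h1.pow 2).const_mul _).add (((hiL t).hasDerivAt.pow 2).const_mul _)
  rw [H.deriv]
  have e1 := heq1 t
  have e2 := heq2 t
  have hv'eq : v' = (i_L t - v_C t / R_C) / C := by
    field_simp at e2 ⊢; linarith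
  have hvS : v_S t = L * i' + v_C t + R_L * i_L t := by linarith
  rw [hv'eq, hvS]
  have key : 0 ≤ (R_C * C * i' + (v_C t / R_C - i_L t)) ^ 2 := sq_nonneg _
  have key2 : 0 ≤ (L - R_C ^ 2 * C) * i' ^ 2 :=
    mul_nonneg (by linarith) (sq_nonneg _)
  rw [← sub_nonneg]
  have hC' : C ≠ 0 := ne_of_gt hC
  have hRC' : R_C ≠ 0 := ne_of_gt hRC
  field_simp
  push_cast
  refine le_of_mul_le_mul_left ?_ hRC
  nlinarith [mul_nonneg hRC.le (sq_nonneg (R_C ^ 2 * C * i' + v_C t - R_C * i_L t)),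
    mul_nonneg (mul_pos (mul_pos hRC (mul_pos hRC hRC)) hC).le key2]
end

section
/- Let L, C, R_L, R_C > 0 with L ≥ R_C²·C, let K ≥ 0, let i_L* ∈ ℝ, and suppose i_L, v_C : ℝ → ℝ are differentiable and satisfy the closed-loop equations L·i_L'(t) = v_S(t) − v_C(t) − R_L·i_L(t) and C·v_C'(t) = i_L(t) − v_C(t)/R_C with the feedback v_S(t) = −K·(i_L(t) − i_L*) + (R_L + R_C)·i_L*. Define P̃_d(i,v) = (R_C/2)·(v/R_C − i)² + ((R_L + R_C + K)/2)·(i − i_L*)². Then for all t, (d/dt) P̃_d(i_L(t), v_C(t)) ≤ 0. -/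
/-- Under the power-shaping feedback
`v_S = −K(i_L − i_L*) + (R_L + R_C) i_L*` (gain `K ≥ 0`), and with
`L ≥ R_C²·C`, the shaped closed-loop potential
`P̃_d(i,v) = (R_C/2)(v/R_C − i)² + ((R_L+R_C+K)/2)(i − i_L*)²` is
nonincreasing along the closed-loop trajectories. -/
theorem rlc_power_shaping_closed_loop (L C R_L R_C K iLs : ℝ)
    (v_S i_L v_C : ℝ → ℝ)
    (hL : 0 < L) (hC : 0 < C) (hRL : 0 < R_L) (hRC : 0 < R_C)
    (hLC : L ≥ R_C ^ 2 * C) (hK : 0 ≤ K)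
    (hiL : Differentiable ℝ i_L) (hvC : Differentiable ℝ v_C)
    (heq1 : ∀ t, L * deriv i_L t = v_S t - v_C t - R_L * i_L t)
    (heq2 : ∀ t, C * deriv v_C t = i_L t - v_C t / R_C)
    (hfb : ∀ t, v_S t = -K * (i_L t - iLs) + (R_L + R_C) * iLs) :
    ∀ t, deriv (fun τ => R_C / 2 * (v_C τ / R_C - i_L τ) ^ 2
            + (R_L + R_C + K) / 2 * (i_L τ - iLs) ^ 2) t ≤ 0 := by
  intro t
  have hi := (hiL t).hasDerivAt
  have hv := (hvC t).hasDerivAt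
  have h1 : HasDerivAt (fun τ => v_C τ / R_C - i_L τ)
      (deriv v_C t / R_C - deriv i_L t) t := (hv.div_const R_C).sub hi
  have h2 : HasDerivAt (fun τ => i_L τ - iLs) (deriv i_L t) t := hi.sub_const iLs
  have hD : HasDerivAt (fun τ => R_C / 2 * (v_C τ / R_C - i_L τ) ^ 2
      + (R_L + R_C + K) / 2 * (i_L τ - iLs) ^ 2)
      (R_C / 2 * (2 * (v_C t / R_C - i_L t) ^ 1 * (deriv v_C t / R_C - deriv i_L t))
        + (R_L + R_C + K) / 2 * (2 * (i_L t - iLs) ^ 1 * deriv i_L t)) t := by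
    exact ((h1.pow 2).const_mul _).add ((h2.pow 2).const_mul _)
  rw [hD.deriv]
  have e1 := heq1 t
  have e2 := heq2 t
  have efb := hfb t
  rw [efb] at e1
  have hdi : deriv i_L t = (-K * (i_L t - iLs) + (R_L + R_C) * iLs - v_C t - R_L * i_L t) / L := by
    rw [eq_div_iff hL.ne']; linarith
  have hdv : deriv v_C t = (i_L t - v_C t / R_C) / C := by
    rw [eq_div_iff hC.ne']; linarith
  rw [hdi, hdv]
  set a := v_C t / R_C - i_L t with ha
  set b := i_L t - iLs with hb
  have hva : v_C t = R_C * (a + i_L t) := by rw [ha]; field_simp; ring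
  have key : R_C / 2 * (2 * a ^ 1 * ((i_L t - v_C t / R_C) / C / R_C
        - (-K * (i_L t - iLs) + (R_L + R_C) * iLs - v_C t - R_L * i_L t) / L))
      + (R_L + R_C + K) / 2 * (2 * b ^ 1
        * ((-K * (i_L t - iLs) + (R_L + R_C) * iLs - v_C t - R_L * i_L t) / L))
      = -(a ^ 2) * (1 / C - R_C ^ 2 / L) - (R_L + R_C + K) ^ 2 * b ^ 2 / L := by
    rw [hva]
    field_simp
    ring
  rw [key]
  have h3 : 0 ≤ 1 / C - R_C ^ 2 / L := by
    rw [sub_nonneg, div_le_div_iff₀ hL hC]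
    linarith
  have h4 : 0 ≤ (R_L + R_C + K) ^ 2 * b ^ 2 / L :=
    div_nonneg (mul_nonneg (sq_nonneg _) (sq_nonneg _)) hL.le
  nlinarith [sq_nonneg a, mul_nonneg (sq_nonneg a) h3]
end

section
/- Let i, v : [0,1] × ℝ → ℝ be twice continuously differentiable and satisfy the telegrapher's equations L·∂i/∂t = −∂v/∂z − R·i and C·∂v/∂t = −∂i/∂z − G·v on [0,1] × ℝ, with constants L, C, R, G > 0. Define the mixed potential P(t) = ∫₀¹ ( −(∂v/∂z)·i + (G/2)·v² − (R/2)·i² ) dz. Then for all t: dP/dt = ∫₀¹ ( L·(∂i/∂t)² − C·(∂v/∂t)² ) dz − [ i(1,t)·(∂v/∂t)(1,t) − i(0,t)·(∂v/∂t)(0,t) ]. In particular, if i(0,t) = i(1,t) = 0 for all t (zero boundary energy flow), then dP/dt = ∫₀¹ ( L·(∂i/∂t)² − C·(∂v/∂t)² ) dz, which is not sign definite. -/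
open Function

section helpers

variable {h : ℝ × ℝ → ℝ}

lemma tl_hasDerivAt_fst (hf : DifferentiableAt ℝ h (z, t)) :
    HasDerivAt (fun w => h (w, t)) (fderiv ℝ h (z, t) (1, 0)) z := by
  have hline : HasDerivAt (fun w : ℝ => (w, t)) ((1 : ℝ), (0 : ℝ)) z :=
    (hasDerivAt_id z).prodMk (hasDerivAt_const z t)
  simpa [Function.comp_def] using hf.hasFDerivAt.comp_hasDerivAt z hline

lemma tl_hasDerivAt_snd (hf : DifferentiableAt ℝ h (z, t)) :
    HasDerivAt (fun τ => h (z, τ)) (fderiv ℝ h (z, t) (0, 1)) t := by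
  have hline : HasDerivAt (fun τ : ℝ => (z, τ)) ((0 : ℝ), (1 : ℝ)) t :=
    (hasDerivAt_const t z).prodMk (hasDerivAt_id t)
  simpa [Function.comp_def] using hf.hasFDerivAt.comp_hasDerivAt t hline

lemma tl_contDiff_pd (hf : ContDiff ℝ 2 h) (y : ℝ × ℝ) :
    ContDiff ℝ 1 (fun p => fderiv ℝ h p y) :=
  (ContinuousLinearMap.apply ℝ ℝ y).contDiff.comp (hf.fderiv_right (le_refl 2))

lemma tl_fderiv_pd (hf : ContDiff ℝ 2 h) (p : ℝ × ℝ) (y w : ℝ × ℝ) :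
    fderiv ℝ (fun q => fderiv ℝ h q y) p w = fderiv ℝ (fderiv ℝ h) p w y := by
  have hd : DifferentiableAt ℝ (fderiv ℝ h) p :=
    ((hf.fderiv_right (le_refl 2)).differentiable one_ne_zero) p
  have := ((ContinuousLinearMap.apply ℝ ℝ y).hasFDerivAt.comp p hd.hasFDerivAt).fderiv
  rw [show (fun q => fderiv ℝ h q y) = (ContinuousLinearMap.apply ℝ ℝ y) ∘ (fderiv ℝ h) from rfl,
    this]
  rfl

lemma tl_clairaut (hf : ContDiff ℝ 2 h) (p : ℝ × ℝ) :
    fderiv ℝ (fun q => fderiv ℝ h q (1, 0)) p (0, 1)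
      = fderiv ℝ (fun q => fderiv ℝ h q (0, 1)) p (1, 0) := by
  rw [tl_fderiv_pd hf, tl_fderiv_pd hf]
  exact (hf.contDiffAt.isSymmSndFDerivAt (by simp)).eq _ _

end helpers

/-- z-partial derivative -/
noncomputable def tlPZ (f : ℝ → ℝ → ℝ) : ℝ × ℝ → ℝ := fun p => fderiv ℝ (uncurry f) p (1, 0)
/-- t-partial derivative -/
noncomputable def tlPT (f : ℝ → ℝ → ℝ) : ℝ × ℝ → ℝ := fun p => fderiv ℝ (uncurry f) p (0, 1)
/-- mixed partial: t-derivative of the z-partial -/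
noncomputable def tlPTZ (f : ℝ → ℝ → ℝ) : ℝ × ℝ → ℝ :=
  fun p => fderiv ℝ (fun q => fderiv ℝ (uncurry f) q (1, 0)) p (0, 1)

section pd

variable {f : ℝ → ℝ → ℝ}

lemma tl_hd_z (hf : Differentiable ℝ (uncurry f)) (z t : ℝ) :
    HasDerivAt (fun w => f w t) (tlPZ f (z, t)) z := tl_hasDerivAt_fst (hf _)

lemma tl_hd_t (hf : Differentiable ℝ (uncurry f)) (z t : ℝ) :
    HasDerivAt (f z) (tlPT f (z, t)) t := tl_hasDerivAt_snd (hf _)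

lemma tl_deriv_z (hf : Differentiable ℝ (uncurry f)) : ∀ z t : ℝ,
    deriv (fun w => f w t) z = tlPZ f (z, t) := fun z t => (tl_hd_z hf z t).deriv

lemma tl_deriv_t (hf : Differentiable ℝ (uncurry f)) : ∀ z t : ℝ,
    deriv (f z) t = tlPT f (z, t) := fun z t => (tl_hd_t hf z t).deriv

lemma tl_cont_pz (hf : ContDiff ℝ 2 (uncurry f)) : Continuous (tlPZ f) :=
  (tl_contDiff_pd hf _).continuous

lemma tl_cont_pt (hf : ContDiff ℝ 2 (uncurry f)) : Continuous (tlPT f) :=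
  (tl_contDiff_pd hf _).continuous

lemma tl_cont_ptz (hf : ContDiff ℝ 2 (uncurry f)) : Continuous (tlPTZ f) := by
  have h1 : ContDiff ℝ 1 (tlPZ f) := tl_contDiff_pd hf _
  exact ((ContinuousLinearMap.apply ℝ ℝ ((0:ℝ), (1:ℝ))).continuous.comp
    (h1.continuous_fderiv one_ne_zero))

/-- t-derivative of the z-partial -/
lemma tl_hd_t_pz (hf : ContDiff ℝ 2 (uncurry f)) (z t : ℝ) :
    HasDerivAt (fun τ => tlPZ f (z, τ)) (tlPTZ f (z, t)) t :=
  tl_hasDerivAt_snd (((tl_contDiff_pd hf _).differentiable one_ne_zero) _)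

/-- z-derivative of the t-partial, via Clairaut -/
lemma tl_hd_z_pt (hf : ContDiff ℝ 2 (uncurry f)) (z t : ℝ) :
    HasDerivAt (fun w => tlPT f (w, t)) (tlPTZ f (z, t)) z := by
  have := tl_hasDerivAt_fst (h := tlPT f)
    (((tl_contDiff_pd hf ((0:ℝ),(1:ℝ))).differentiable one_ne_zero) (z, t))
  rwa [show fderiv ℝ (tlPT f) (z, t) (1, 0) = tlPTZ f (z, t) from (tl_clairaut hf _).symm] at this

end pd

/-- For the telegrapher's equations on `[0,1] × ℝ`, the mixed
potential `P(t) = ∫₀¹ (−(∂v/∂z)·i + (G/2)v² − (R/2)i²) dz` satisfies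
`dP/dt = ∫₀¹ (L(∂i/∂t)² − C(∂v/∂t)²) dz − [i(1,t)(∂v/∂t)(1,t) − i(0,t)(∂v/∂t)(0,t)]`;
in particular with zero boundary currents the boundary term vanishes. -/
theorem transmission_line_mixed_potential_rate (L C R G : ℝ) (i v : ℝ → ℝ → ℝ)
    (hL : 0 < L) (hC : 0 < C) (hR : 0 < R) (hG : 0 < G)
    (hi : ContDiff ℝ 2 (Function.uncurry i)) (hv : ContDiff ℝ 2 (Function.uncurry v))
    (heq1 : ∀ t : ℝ, ∀ z ∈ Set.Icc (0:ℝ) 1,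
      L * deriv (i z) t = -(deriv (fun w => v w t) z) - R * i z t)
    (heq2 : ∀ t : ℝ, ∀ z ∈ Set.Icc (0:ℝ) 1,
      C * deriv (v z) t = -(deriv (fun w => i w t) z) - G * v z t) :
    (∀ t : ℝ,
      deriv (fun τ => ∫ z in (0:ℝ)..1,
          (-(deriv (fun w => v w τ) z) * i z τ
            + G / 2 * (v z τ) ^ 2 - R / 2 * (i z τ) ^ 2)) t
        = (∫ z in (0:ℝ)..1, (L * (deriv (i z) t) ^ 2 - C * (deriv (v z) t) ^ 2))
          - (i 1 t * deriv (v 1) t - i 0 t * deriv (v 0) t))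
    ∧ ((∀ t : ℝ, i 0 t = 0 ∧ i 1 t = 0) →
        ∀ t : ℝ,
          deriv (fun τ => ∫ z in (0:ℝ)..1,
              (-(deriv (fun w => v w τ) z) * i z τ
                + G / 2 * (v z τ) ^ 2 - R / 2 * (i z τ) ^ 2)) t
            = ∫ z in (0:ℝ)..1,
                (L * (deriv (i z) t) ^ 2 - C * (deriv (v z) t) ^ 2)) := by
  have hid : Differentiable ℝ (uncurry i) := hi.differentiable (by norm_num)
  have hvd : Differentiable ℝ (uncurry v) := hv.differentiable (by norm_num)
  have key : ∀ t : ℝ,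
      deriv (fun τ => ∫ z in (0:ℝ)..1,
          (-(deriv (fun w => v w τ) z) * i z τ
            + G / 2 * (v z τ) ^ 2 - R / 2 * (i z τ) ^ 2)) t
        = (∫ z in (0:ℝ)..1, (L * (deriv (i z) t) ^ 2 - C * (deriv (v z) t) ^ 2))
          - (i 1 t * deriv (v 1) t - i 0 t * deriv (v 0) t) := by
    intro t
    simp only [tl_deriv_z hvd, tl_deriv_t hvd, tl_deriv_t hid]
    -- continuity facts
    have ci : Continuous (uncurry i) := hi.continuous
    have cv : Continuous (uncurry v) := hv.continuous
    have cPZv : Continuous (tlPZ v) := tl_cont_pz hv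
    have cPTv : Continuous (tlPT v) := tl_cont_pt hv
    have cPZi : Continuous (tlPZ i) := tl_cont_pz hi
    have cPTi : Continuous (tlPT i) := tl_cont_pt hi
    have cPTZv : Continuous (tlPTZ v) := tl_cont_ptz hv
    have ci' : Continuous (fun p : ℝ × ℝ => i p.1 p.2) := ci
    have cv' : Continuous (fun p : ℝ × ℝ => v p.1 p.2) := cv
    -- the derivative of the integrand in τ
    set F' : ℝ → ℝ → ℝ := fun x z =>
      -(tlPTZ v (z, x)) * i z x + -(tlPZ v (z, x)) * tlPT i (z, x)
        + G * (v z x * tlPT v (z, x)) - R * (i z x * tlPT i (z, x)) with hF'def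
    have cΦ : Continuous (fun p : ℝ × ℝ => F' p.2 p.1) := by
      simp only [hF'def]; fun_prop
    obtain ⟨M, hM⟩ : ∃ M, ∀ p ∈ (Set.Icc (0:ℝ) 1 ×ˢ Set.Icc (t-1) (t+1)),
        ‖(fun p : ℝ × ℝ => F' p.2 p.1) p‖ ≤ M :=
      (isCompact_Icc.prod isCompact_Icc).exists_bound_of_continuousOn cΦ.continuousOn
    have hdiff : ∀ (z x : ℝ), HasDerivAt
        (fun τ => -(tlPZ v (z, τ)) * i z τ + G / 2 * (v z τ) ^ 2 - R / 2 * (i z τ) ^ 2)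
        (F' x z) x := by
      intro z x
      have hIt : HasDerivAt (fun τ => i z τ) (tlPT i (z, x)) x := tl_hd_t hid z x
      have hVt : HasDerivAt (fun τ => v z τ) (tlPT v (z, x)) x := tl_hd_t hvd z x
      have hVz : HasDerivAt (fun τ => tlPZ v (z, τ)) (tlPTZ v (z, x)) x := tl_hd_t_pz hv z x
      have h1 := ((hVz.neg.mul hIt).add ((hVt.pow 2).const_mul (G/2))).sub
        ((hIt.pow 2).const_mul (R/2))
      convert h1 using 1
      · rfl
      · rfl
      · rfl
      simp only [hF'def, Pi.neg_apply]
      push_cast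
      ring
    have hcontF : ∀ x : ℝ, Continuous
        (fun z => -(tlPZ v (z, x)) * i z x + G / 2 * (v z x) ^ 2 - R / 2 * (i z x) ^ 2) := by
      intro x; fun_prop
    have hcontF' : Continuous (fun z => F' t z) :=
      cΦ.comp (continuous_id.prodMk continuous_const)
    have hmain := intervalIntegral.hasDerivAt_integral_of_dominated_loc_of_deriv_le
      (μ := MeasureTheory.volume) (a := (0:ℝ)) (b := 1)
      (F := fun x z => -(tlPZ v (z, x)) * i z x + G / 2 * (v z x) ^ 2 - R / 2 * (i z x) ^ 2)
      (F' := F') (x₀ := t) (bound := fun _ => M) (s := Metric.ball t 1) (Metric.ball_mem_nhds t one_pos)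
      (Filter.Eventually.of_forall fun x => ((hcontF x).aestronglyMeasurable))
      ((hcontF t).intervalIntegrable 0 1)
      hcontF'.aestronglyMeasurable
      (Filter.Eventually.of_forall fun z hz x hx => by
        have hz' : z ∈ Set.Icc (0:ℝ) 1 := by
          have := Set.uIoc_of_le (by norm_num : (0:ℝ) ≤ 1) ▸ hz
          exact ⟨le_of_lt this.1, this.2⟩
        have hx' : x ∈ Set.Icc (t-1) (t+1) := by
          have := Metric.mem_ball.mp hx
          rw [Real.dist_eq] at this
          constructor <;> [linarith [abs_lt.mp this]; linarith [abs_lt.mp this]]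
        exact hM (z, x) ⟨hz', hx'⟩)
      intervalIntegrable_const
      (Filter.Eventually.of_forall fun z _ x _ => hdiff z x)
    rw [hmain.2.deriv]
    -- now compute the integral of F' t
    have huIcc : Set.uIcc (0:ℝ) 1 = Set.Icc 0 1 := Set.uIcc_of_le (by norm_num)
    -- FTC part
    set g : ℝ → ℝ := fun z => i z t * tlPT v (z, t) with hgdef
    set g' : ℝ → ℝ := fun z => tlPZ i (z, t) * tlPT v (z, t) + i z t * tlPTZ v (z, t) with hg'def
    have hg : ∀ z : ℝ, HasDerivAt g (g' z) z := fun z =>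
      (tl_hd_z hid z t).mul (tl_hd_z_pt hv z t)
    have hg'cont : Continuous g' := by simp only [hg'def]; fun_prop
    have hftc : ∫ z in (0:ℝ)..1, g' z = g 1 - g 0 :=
      intervalIntegral.integral_eq_sub_of_hasDerivAt (fun z _ => hg z)
        (hg'cont.intervalIntegrable 0 1)
    have hcongr : Set.EqOn (F' t)
        (fun z => (L * (tlPT i (z, t)) ^ 2 - C * (tlPT v (z, t)) ^ 2) - g' z)
        (Set.uIcc (0:ℝ) 1) := by
      intro z hz
      rw [huIcc] at hz
      have e1 := heq1 t z hz
      have e2 := heq2 t z hz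
      rw [tl_deriv_t hid, tl_deriv_z hvd] at e1
      rw [tl_deriv_t hvd, tl_deriv_z hid] at e2
      simp only [hF'def, hg'def]
      linear_combination (-(tlPT i (z, t))) * e1 + (tlPT v (z, t)) * e2
    rw [intervalIntegral.integral_congr hcongr,
      intervalIntegral.integral_sub (((by fun_prop : Continuous (fun z => L * (tlPT i (z, t)) ^ 2 - C * (tlPT v (z, t)) ^ 2))).intervalIntegrable 0 1) (hg'cont.intervalIntegrable 0 1), hftc]
  refine ⟨key, fun hb t => ?_⟩
  rw [key t, (hb t).1, (hb t).2]
  ring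
end

section
/- Let R, G > 0 and let i : [0,1] → ℝ be continuously differentiable and v : [0,1] → ℝ be continuous. Define P̃(i,v) = ∫₀¹ ( (R/2)·i² + (G/2)·v² + v·i′ + (1/G)·(i′)² ) dz. Then P̃(i,v) = ∫₀¹ (1/(2G))·(i′ + G·v)² dz + ∫₀¹ (1/(2G))·(i′)² dz + ∫₀¹ (R/2)·i² dz; consequently P̃(i,v) ≥ 0, and P̃(i,v) = 0 if and only if i ≡ 0 and v ≡ 0 on [0,1]. -/
open MeasureTheory Set

/-- A continuous nonnegative function with zero integral on `[0,1]` vanishes on `[0,1]`. -/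
lemma cont_nonneg_integral_zero {f : ℝ → ℝ} (hf : Continuous f) (hnn : ∀ z, 0 ≤ f z)
    (h : (∫ z in (0:ℝ)..1, f z) = 0) : ∀ z ∈ Set.Icc (0:ℝ) 1, f z = 0 := by
  have hint : IntervalIntegrable f volume 0 1 := hf.intervalIntegrable 0 1
  have hae : f =ᵐ[volume.restrict (Ioc (0:ℝ) 1)] 0 := by
    have := (intervalIntegral.integral_eq_zero_iff_of_le_of_nonneg_ae (by norm_num : (0:ℝ) ≤ 1)
      (Filter.Eventually.of_forall fun z => hnn z) hint).mp h
    exact this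
  have hae' : f =ᵐ[volume.restrict (Icc (0:ℝ) 1)] 0 := by
    rwa [Measure.restrict_congr_set Ioc_ae_eq_Icc] at hae
  have := Measure.eqOn_Icc_of_ae_eq (volume : Measure ℝ) (by norm_num : (0:ℝ) ≠ 1) hae'
    hf.continuousOn continuousOn_const
  exact fun z hz => this hz

/-- The shaped mixed potential
`P̃(i,v) = ∫₀¹ ((R/2)i² + (G/2)v² + v·i′ + (1/G)(i′)²) dz` decomposes as a sum
of squares, is nonnegative, and vanishes iff `i ≡ 0` and `v ≡ 0` on `[0,1]`. -/
theorem shaped_potential_sum_of_squares (R G : ℝ) (hR : 0 < R) (hG : 0 < G)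
    (i v : ℝ → ℝ) (hi : ContDiff ℝ 1 i) (hv : Continuous v) :
    ((∫ z in (0:ℝ)..1,
        (R / 2 * (i z) ^ 2 + G / 2 * (v z) ^ 2 + v z * deriv i z
          + 1 / G * (deriv i z) ^ 2))
      = (∫ z in (0:ℝ)..1, 1 / (2 * G) * (deriv i z + G * v z) ^ 2)
        + (∫ z in (0:ℝ)..1, 1 / (2 * G) * (deriv i z) ^ 2)
        + (∫ z in (0:ℝ)..1, R / 2 * (i z) ^ 2))
    ∧ (0 ≤ ∫ z in (0:ℝ)..1,
        (R / 2 * (i z) ^ 2 + G / 2 * (v z) ^ 2 + v z * deriv i z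
          + 1 / G * (deriv i z) ^ 2))
    ∧ ((∫ z in (0:ℝ)..1,
        (R / 2 * (i z) ^ 2 + G / 2 * (v z) ^ 2 + v z * deriv i z
          + 1 / G * (deriv i z) ^ 2)) = 0
        ↔ ∀ z ∈ Set.Icc (0:ℝ) 1, i z = 0 ∧ v z = 0) := by
  have hG' : G ≠ 0 := ne_of_gt hG
  have hdi : Continuous (deriv i) := hi.continuous_deriv le_rfl
  have hci : Continuous i := hi.continuous
  -- continuity of the three pieces
  have hc1 : Continuous fun z => 1 / (2 * G) * (deriv i z + G * v z) ^ 2 := by continuity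
  have hc2 : Continuous fun z => 1 / (2 * G) * (deriv i z) ^ 2 := by continuity
  have hc3 : Continuous fun z => R / 2 * (i z) ^ 2 := by continuity
  have h1 : IntervalIntegrable (fun z => 1 / (2 * G) * (deriv i z + G * v z) ^ 2) volume 0 1 :=
    hc1.intervalIntegrable 0 1
  have h2 : IntervalIntegrable (fun z => 1 / (2 * G) * (deriv i z) ^ 2) volume 0 1 :=
    hc2.intervalIntegrable 0 1
  have h3 : IntervalIntegrable (fun z => R / 2 * (i z) ^ 2) volume 0 1 :=
    hc3.intervalIntegrable 0 1
  have key : ∀ z : ℝ, R / 2 * (i z) ^ 2 + G / 2 * (v z) ^ 2 + v z * deriv i z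
      + 1 / G * (deriv i z) ^ 2
      = 1 / (2 * G) * (deriv i z + G * v z) ^ 2 + 1 / (2 * G) * (deriv i z) ^ 2
        + R / 2 * (i z) ^ 2 := by
    intro z; field_simp; ring
  have hdecomp : (∫ z in (0:ℝ)..1,
        (R / 2 * (i z) ^ 2 + G / 2 * (v z) ^ 2 + v z * deriv i z
          + 1 / G * (deriv i z) ^ 2))
      = (∫ z in (0:ℝ)..1, 1 / (2 * G) * (deriv i z + G * v z) ^ 2)
        + (∫ z in (0:ℝ)..1, 1 / (2 * G) * (deriv i z) ^ 2)
        + (∫ z in (0:ℝ)..1, R / 2 * (i z) ^ 2) := by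
    rw [← intervalIntegral.integral_add h1 h2, ← intervalIntegral.integral_add (h1.add h2) h3]
    exact intervalIntegral.integral_congr fun z _ => key z
  have hnn1 : ∀ z : ℝ, 0 ≤ 1 / (2 * G) * (deriv i z + G * v z) ^ 2 := fun z => by positivity
  have hnn2 : ∀ z : ℝ, 0 ≤ 1 / (2 * G) * (deriv i z) ^ 2 := fun z => by positivity
  have hnn3 : ∀ z : ℝ, 0 ≤ R / 2 * (i z) ^ 2 := fun z => by positivity
  have hI1 : 0 ≤ ∫ z in (0:ℝ)..1, 1 / (2 * G) * (deriv i z + G * v z) ^ 2 :=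
    intervalIntegral.integral_nonneg (by norm_num) fun z _ => hnn1 z
  have hI2 : 0 ≤ ∫ z in (0:ℝ)..1, 1 / (2 * G) * (deriv i z) ^ 2 :=
    intervalIntegral.integral_nonneg (by norm_num) fun z _ => hnn2 z
  have hI3 : 0 ≤ ∫ z in (0:ℝ)..1, R / 2 * (i z) ^ 2 :=
    intervalIntegral.integral_nonneg (by norm_num) fun z _ => hnn3 z
  refine ⟨hdecomp, by rw [hdecomp]; linarith, ?_⟩
  constructor
  · intro h0
    rw [hdecomp] at h0
    have e1 : (∫ z in (0:ℝ)..1, 1 / (2 * G) * (deriv i z + G * v z) ^ 2) = 0 := by linarith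
    have e3 : (∫ z in (0:ℝ)..1, R / 2 * (i z) ^ 2) = 0 := by linarith
    have z1 := cont_nonneg_integral_zero hc1 hnn1 e1
    have z3 := cont_nonneg_integral_zero hc3 hnn3 e3
    intro z hz
    have hiz : i z = 0 := by
      have := z3 z hz
      have h2 : (i z) ^ 2 = 0 := by
        have hR2 : R / 2 ≠ 0 := by positivity
        exact (mul_eq_zero.mp this).resolve_left hR2
      exact pow_eq_zero_iff (by norm_num) |>.mp h2
    have hsum : deriv i z + G * v z = 0 := by
      have := z1 z hz
      have hc : 1 / (2 * G) ≠ 0 := by positivity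
      have h2 : (deriv i z + G * v z) ^ 2 = 0 := (mul_eq_zero.mp this).resolve_left hc
      exact pow_eq_zero_iff (by norm_num) |>.mp h2
    -- also the second integral vanishes, giving deriv i z = 0 hence v z = 0
    have e2 : (∫ z in (0:ℝ)..1, 1 / (2 * G) * (deriv i z) ^ 2) = 0 := by linarith
    have z2 := cont_nonneg_integral_zero hc2 hnn2 e2
    have hdz : deriv i z = 0 := by
      have := z2 z hz
      have hc : 1 / (2 * G) ≠ 0 := by positivity
      have h2 : (deriv i z) ^ 2 = 0 := (mul_eq_zero.mp this).resolve_left hc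
      exact pow_eq_zero_iff (by norm_num) |>.mp h2
    refine ⟨hiz, ?_⟩
    have : G * v z = 0 := by linarith [hsum, hdz]
    exact (mul_eq_zero.mp this).resolve_left hG'
  · intro hz
    have : (∫ z in (0:ℝ)..1,
        (R / 2 * (i z) ^ 2 + G / 2 * (v z) ^ 2 + v z * deriv i z
          + 1 / G * (deriv i z) ^ 2))
        = ∫ z in (0:ℝ)..1, (0:ℝ) := by
      apply intervalIntegral.integral_congr_ae
      rw [Set.uIoc_of_le (by norm_num : (0:ℝ) ≤ 1)]
      have hone : {(1:ℝ)}ᶜ ∈ (ae (volume : Measure ℝ)) :=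
        compl_mem_ae_iff.mpr (measure_singleton (1:ℝ))
      filter_upwards [hone] with x hx hmem
      have hxo : x ∈ Ioo (0:ℝ) 1 := ⟨hmem.1, lt_of_le_of_ne hmem.2 hx⟩
      have hiz : i x = 0 := (hz x ⟨le_of_lt hxo.1, le_of_lt hxo.2⟩).1
      have hvz : v x = 0 := (hz x ⟨le_of_lt hxo.1, le_of_lt hxo.2⟩).2
      have hdz : deriv i x = 0 := by
        have hev : i =ᶠ[nhds x] (fun _ => (0:ℝ)) := by
          filter_upwards [isOpen_Ioo.mem_nhds hxo] with y hy
          exact (hz y ⟨le_of_lt hy.1, le_of_lt hy.2⟩).1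
        rw [hev.deriv_eq, deriv_const]
      simp [hiz, hvz, hdz]
    rw [this, intervalIntegral.integral_zero]
end

section
/- Let G, R > 0 and let i, v : [0,1] → ℝ be continuously differentiable with i(1)·v(1) = i(0)·v(0) (zero boundary energy-flow product). Define P(i,v) = ∫₀¹ ( −v′·i + (G/2)·v² − (R/2)·i² ) dz and P̃(i,v) = ∫₀¹ ( (R/2)·i² + (G/2)·v² + v·i′ + (1/G)·(i′)² ) dz. Then P̃(i,v) = −P(i,v) + (1/G)·∫₀¹ (G·v + i′)² dz; i.e., P̃ is obtained from P by the construction P̃ = λ·P + (1/2)∫₀¹ δP·K·δP dz with λ = −1 and K = diag(0, 2/G), where δ_v P = G·v + i′. -/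
/-- With zero boundary energy-flow product `i(1)v(1) = i(0)v(0)`,
the shaped potential `P̃` is obtained from the Brayton–Moser potential `P` by
`P̃ = −P + (1/G)∫₀¹ (G·v + i′)² dz` (the construction `λ = −1`,
`K = diag(0, 2/G)`, `δ_v P = G·v + i′`). -/
theorem shaped_potential_from_mixed_potential (G R : ℝ) (hG : 0 < G) (hR : 0 < R)
    (i v : ℝ → ℝ) (hi : ContDiff ℝ 1 i) (hv : ContDiff ℝ 1 v)
    (hbd : i 1 * v 1 = i 0 * v 0) :
    (∫ z in (0:ℝ)..1,
        (R / 2 * (i z) ^ 2 + G / 2 * (v z) ^ 2 + v z * deriv i z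
          + 1 / G * (deriv i z) ^ 2))
      = -(∫ z in (0:ℝ)..1,
            (-(deriv v z) * i z + G / 2 * (v z) ^ 2 - R / 2 * (i z) ^ 2))
        + 1 / G * ∫ z in (0:ℝ)..1, (G * v z + deriv i z) ^ 2 := by
  have hGne : G ≠ 0 := hG.ne'
  have hid : Differentiable ℝ i := hi.differentiable one_ne_zero
  have hvd : Differentiable ℝ v := hv.differentiable one_ne_zero
  have hic : Continuous i := hid.continuous
  have hvc : Continuous v := hvd.continuous
  have hic' : Continuous (deriv i) := (hi.iterate_deriv' 0 1).continuous
  have hvc' : Continuous (deriv v) := (hv.iterate_deriv' 0 1).continuous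
  -- integral of derivative of i*v
  have hderiv : ∀ z : ℝ, deriv (fun z => i z * v z) z
      = deriv i z * v z + i z * deriv v z := fun z =>
    deriv_mul (hid z) (hvd z)
  have hzero : (∫ z in (0:ℝ)..1, (deriv i z * v z + i z * deriv v z)) = 0 := by
    have h1 : (∫ z in (0:ℝ)..1, deriv (fun z => i z * v z) z)
        = i 1 * v 1 - i 0 * v 0 := by
      apply intervalIntegral.integral_deriv_eq_sub
      · exact fun x _ => (hid x).mul (hvd x)
      · apply Continuous.intervalIntegrable
        have : (deriv fun z => i z * v z)
            = fun z => deriv i z * v z + i z * deriv v z := funext hderiv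
        rw [this]
        exact (hic'.mul hvc).add (hic.mul hvc')
    rw [intervalIntegral.integral_congr (fun z _ => (hderiv z).symm), h1, hbd,
      sub_self]
  -- integrability facts
  have I1 : IntervalIntegrable
      (fun z => R / 2 * (i z) ^ 2 + G / 2 * (v z) ^ 2 + v z * deriv i z
        + 1 / G * (deriv i z) ^ 2) MeasureTheory.volume 0 1 := by
    apply Continuous.intervalIntegrable; fun_prop
  have I2 : IntervalIntegrable
      (fun z => -(deriv v z) * i z + G / 2 * (v z) ^ 2 - R / 2 * (i z) ^ 2)
      MeasureTheory.volume 0 1 := by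
    apply Continuous.intervalIntegrable; fun_prop
  have I3 : IntervalIntegrable
      (fun z => (G * v z + deriv i z) ^ 2) MeasureTheory.volume 0 1 := by
    apply Continuous.intervalIntegrable; fun_prop
  have key : (∫ z in (0:ℝ)..1,
      ((R / 2 * (i z) ^ 2 + G / 2 * (v z) ^ 2 + v z * deriv i z
          + 1 / G * (deriv i z) ^ 2)
        + (-(deriv v z) * i z + G / 2 * (v z) ^ 2 - R / 2 * (i z) ^ 2)
        - 1 / G * (G * v z + deriv i z) ^ 2))
      = 0 := by
    have hcong : ∀ z ∈ Set.uIcc (0:ℝ) 1,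
        ((R / 2 * (i z) ^ 2 + G / 2 * (v z) ^ 2 + v z * deriv i z
            + 1 / G * (deriv i z) ^ 2)
          + (-(deriv v z) * i z + G / 2 * (v z) ^ 2 - R / 2 * (i z) ^ 2)
          - 1 / G * (G * v z + deriv i z) ^ 2)
        = -(deriv i z * v z + i z * deriv v z) := by
      intro z _
      field_simp
      ring
    rw [intervalIntegral.integral_congr hcong, intervalIntegral.integral_neg,
      hzero, neg_zero]
  rw [intervalIntegral.integral_sub (I1.add I2) (I3.const_mul _),
    intervalIntegral.integral_add I1 I2,
    intervalIntegral.integral_const_mul] at key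
  linarith
end

section
/- Let i, v : [0,1] × ℝ → ℝ be twice continuously differentiable and satisfy the telegrapher's equations L·∂i/∂t = −∂v/∂z − R·i and C·∂v/∂t = −∂i/∂z − G·v on [0,1] × ℝ, with constants L, C, R, G > 0. Then for all (z,t): −L·(∂i/∂t)(z,t) + (2C/G)·(∂²v/∂z∂t)(z,t) = R·i(z,t) − (∂v/∂z)(z,t) − (2/G)·(∂²i/∂z²)(z,t), and −C·(∂v/∂t)(z,t) = G·v(z,t) + (∂i/∂z)(z,t). (That is, the pair (Ã, P̃) with Ã = [[−L, (2C/G)·∂/∂z],[0, −C]] is an admissible pair: Ã·∂u/∂t equals the variational derivative of P̃.) -/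
open Function Set

lemma pd_z_eq (f : ℝ → ℝ → ℝ) (hf : ContDiff ℝ 2 (Function.uncurry f)) (t w : ℝ) :
    HasDerivAt (fun w' => f w' t) (fderiv ℝ (Function.uncurry f) (w, t) (1, 0)) w := by
  have h1 : HasFDerivAt (Function.uncurry f) (fderiv ℝ (Function.uncurry f) (w, t)) (w, t) :=
    ((hf.differentiable (by norm_num)) (w, t)).hasFDerivAt
  have h2 : HasDerivAt (fun w' : ℝ => (w', t)) ((1 : ℝ), (0 : ℝ)) w :=
    (hasDerivAt_id w).prodMk (hasDerivAt_const w t)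
  exact h1.comp_hasDerivAt w h2

lemma pd_t_eq (f : ℝ → ℝ → ℝ) (hf : ContDiff ℝ 2 (Function.uncurry f)) (t w : ℝ) :
    HasDerivAt (f w) (fderiv ℝ (Function.uncurry f) (w, t) (0, 1)) t := by
  have h1 : HasFDerivAt (Function.uncurry f) (fderiv ℝ (Function.uncurry f) (w, t)) (w, t) :=
    ((hf.differentiable (by norm_num)) (w, t)).hasFDerivAt
  have h2 : HasDerivAt (fun s : ℝ => (w, s)) ((0 : ℝ), (1 : ℝ)) t :=
    (hasDerivAt_const t w).prodMk (hasDerivAt_id t)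
  exact h1.comp_hasDerivAt t h2

lemma fderiv_apply_cd (f : ℝ → ℝ → ℝ) (hf : ContDiff ℝ 2 (Function.uncurry f)) (t : ℝ)
    (e : ℝ × ℝ) :
    ContDiff ℝ 1 (fun w => fderiv ℝ (Function.uncurry f) (w, t) e) := by
  have h1 : ContDiff ℝ 1 (fderiv ℝ (Function.uncurry f)) := hf.fderiv_right (by norm_num)
  exact (h1.clm_apply contDiff_const).comp (contDiff_id.prodMk contDiff_const)

lemma pd_z_cd (f : ℝ → ℝ → ℝ) (hf : ContDiff ℝ 2 (Function.uncurry f)) (t : ℝ) :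
    ContDiff ℝ 1 (fun w => deriv (fun w' => f w' t) w) := by
  have : (fun w => deriv (fun w' => f w' t) w)
      = fun w => fderiv ℝ (Function.uncurry f) (w, t) (1, 0) := by
    funext w; exact (pd_z_eq f hf t w).deriv
  rw [this]; exact fderiv_apply_cd f hf t _

lemma pd_t_cd (f : ℝ → ℝ → ℝ) (hf : ContDiff ℝ 2 (Function.uncurry f)) (t : ℝ) :
    ContDiff ℝ 1 (fun w => deriv (f w) t) := by
  have : (fun w => deriv (f w) t)
      = fun w => fderiv ℝ (Function.uncurry f) (w, t) (0, 1) := by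
    funext w; exact (pd_t_eq f hf t w).deriv
  rw [this]; exact fderiv_apply_cd f hf t _

/-- Solutions of the telegrapher's equations satisfy the
Brayton–Moser form with the admissible pair `Ã = [[−L, (2C/G)∂/∂z],[0, −C]]`
and shaped potential `P̃`:
`−L·∂i/∂t + (2C/G)·∂²v/∂z∂t = R·i − ∂v/∂z − (2/G)·∂²i/∂z²` and
`−C·∂v/∂t = G·v + ∂i/∂z`. -/
theorem transmission_line_admissible_pair (L C R G : ℝ) (i v : ℝ → ℝ → ℝ)
    (hL : 0 < L) (hC : 0 < C) (hR : 0 < R) (hG : 0 < G)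
    (hi : ContDiff ℝ 2 (Function.uncurry i)) (hv : ContDiff ℝ 2 (Function.uncurry v))
    (heq1 : ∀ t : ℝ, ∀ z ∈ Set.Icc (0:ℝ) 1,
      L * deriv (i z) t = -(deriv (fun w => v w t) z) - R * i z t)
    (heq2 : ∀ t : ℝ, ∀ z ∈ Set.Icc (0:ℝ) 1,
      C * deriv (v z) t = -(deriv (fun w => i w t) z) - G * v z t) :
    ∀ t : ℝ, ∀ z ∈ Set.Icc (0:ℝ) 1,
      (-L * deriv (i z) t + 2 * C / G * deriv (fun w => deriv (v w) t) z
        = R * i z t - deriv (fun w => v w t) z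
          - 2 / G * deriv (fun w => deriv (fun w' => i w' t) w) z)
      ∧ (-C * deriv (v z) t = G * v z t + deriv (fun w => i w t) z) := by
  intro t z hz
  -- notation
  have hφ : ContDiff ℝ 1 (fun w => deriv (v w) t) := pd_t_cd v hv t
  have hψ : ContDiff ℝ 1 (fun w => deriv (fun w' => i w' t) w) := pd_z_cd i hi t
  have hh : ContDiff ℝ 2 (fun w => v w t) :=
    hv.comp (contDiff_id.prodMk contDiff_const)
  -- the differentiated version of heq2, on all of Icc
  have key : ∀ z ∈ Set.Icc (0:ℝ) 1,
      C * deriv (fun w => deriv (v w) t) z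
        = -(deriv (fun w => deriv (fun w' => i w' t) w) z)
          - G * deriv (fun w => v w t) z := by
    -- first on the open interval
    have hint : ∀ z ∈ Set.Ioo (0:ℝ) 1,
        C * deriv (fun w => deriv (v w) t) z
          = -(deriv (fun w => deriv (fun w' => i w' t) w) z)
            - G * deriv (fun w => v w t) z := by
      intro z hz
      have hmem : Set.Ioo (0:ℝ) 1 ∈ nhds z := Ioo_mem_nhds hz.1 hz.2
      have hev : (fun w => C * deriv (v w) t)
          =ᶠ[nhds z] (fun w => -(deriv (fun w' => i w' t) w) - G * v w t) := by
        filter_upwards [hmem] with w hw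
        exact heq2 t w (Set.Ioo_subset_Icc_self hw)
      have hde := hev.deriv_eq
      rw [deriv_const_mul_field] at hde
      rw [hde]
      have d1 : DifferentiableAt ℝ (fun w => -(deriv (fun w' => i w' t) w)) z :=
        ((hψ.differentiable one_ne_zero) z).neg
      have d2 : DifferentiableAt ℝ (fun w => G * v w t) z :=
        (((hh.differentiable (by norm_num)) z)).const_mul G
      rw [deriv_fun_sub d1 d2, deriv.fun_neg, deriv_const_mul_field]
    -- continuity of both sides
    have c1 : Continuous (fun z => C * deriv (fun w => deriv (v w) t) z) :=
      continuous_const.mul (hφ.continuous_deriv le_rfl)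
    have c2 : Continuous (fun z =>
        -(deriv (fun w => deriv (fun w' => i w' t) w) z)
          - G * deriv (fun w => v w t) z) :=
      ((hψ.continuous_deriv le_rfl).neg).sub
        (continuous_const.mul (hh.continuous_deriv (by norm_num)))
    have hEq : Set.EqOn (fun z => C * deriv (fun w => deriv (v w) t) z)
        (fun z => -(deriv (fun w => deriv (fun w' => i w' t) w) z)
          - G * deriv (fun w => v w t) z) (Set.Ioo 0 1) := fun z hz => hint z hz
    have hcl : Set.EqOn _ _ (closure (Set.Ioo (0:ℝ) 1)) :=
      Set.EqOn.closure hEq c1 c2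
    rw [closure_Ioo (by norm_num : (0:ℝ) ≠ 1)] at hcl
    intro z hz
    exact hcl hz
  constructor
  · have h1 := heq1 t z hz
    have h2 := key z hz
    have hGne : G ≠ 0 := hG.ne'
    field_simp
    nlinarith [h1, h2, sq_nonneg G]
  · have h2 := heq2 t z hz
    linarith
end

section
/- Let i, v : [0,1] × ℝ → ℝ be smooth (at least C²) and satisfy the telegrapher's equations L·∂i/∂t = −∂v/∂z − R·i and C·∂v/∂t = −∂i/∂z − G·v on [0,1] × ℝ, with constants L, C, R, G > 0. Define P̃(t) = ∫₀¹ ( (R/2)·i² + (G/2)·v² + v·(∂i/∂z) + (1/G)·(∂i/∂z)² ) dz. Then for all t: dP̃/dt = ∫₀¹ ( −L·(∂i/∂t)² + (2C/G)·(∂i/∂t)·(∂²v/∂z∂t) − C·(∂v/∂t)² ) dz + [ (v + (2/G)·∂i/∂z)·(∂i/∂t) ] evaluated from z = 0 to z = 1. -/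
open MeasureTheory intervalIntegral Metric Set

namespace TelegrapherAux

noncomputable def pz (u : ℝ → ℝ → ℝ) (z t : ℝ) : ℝ :=
  fderiv ℝ (Function.uncurry u) (z, t) (1, 0)

noncomputable def pt (u : ℝ → ℝ → ℝ) (z t : ℝ) : ℝ :=
  fderiv ℝ (Function.uncurry u) (z, t) (0, 1)

noncomputable def pzz (u : ℝ → ℝ → ℝ) (z t : ℝ) : ℝ :=
  fderiv ℝ (fun p : ℝ × ℝ => fderiv ℝ (Function.uncurry u) p (1, 0)) (z, t) (1, 0)

noncomputable def pzt (u : ℝ → ℝ → ℝ) (z t : ℝ) : ℝ :=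
  fderiv ℝ (fun p : ℝ × ℝ => fderiv ℝ (Function.uncurry u) p (0, 1)) (z, t) (1, 0)

noncomputable def ptz (u : ℝ → ℝ → ℝ) (z t : ℝ) : ℝ :=
  fderiv ℝ (fun p : ℝ × ℝ => fderiv ℝ (Function.uncurry u) p (1, 0)) (z, t) (0, 1)

variable {u : ℝ → ℝ → ℝ}

lemma hasDerivAt_z (hu : ContDiff ℝ 2 (Function.uncurry u)) (t z : ℝ) :
    HasDerivAt (fun w => u w t) (pz u z t) z := by
  have h1 : HasFDerivAt (Function.uncurry u) (fderiv ℝ (Function.uncurry u) (z, t)) (z, t) :=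
    (hu.differentiable two_ne_zero (z, t)).hasFDerivAt
  have h2 : HasDerivAt (fun w : ℝ => (w, t)) ((1 : ℝ), (0 : ℝ)) z :=
    (hasDerivAt_id z).prodMk (hasDerivAt_const z t)
  exact h1.comp_hasDerivAt z h2

lemma hasDerivAt_t (hu : ContDiff ℝ 2 (Function.uncurry u)) (z t : ℝ) :
    HasDerivAt (fun τ => u z τ) (pt u z t) t := by
  have h1 : HasFDerivAt (Function.uncurry u) (fderiv ℝ (Function.uncurry u) (z, t)) (z, t) :=
    (hu.differentiable two_ne_zero (z, t)).hasFDerivAt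
  have h2 : HasDerivAt (fun τ : ℝ => (z, τ)) ((0 : ℝ), (1 : ℝ)) t :=
    (hasDerivAt_const t z).prodMk (hasDerivAt_id t)
  exact h1.comp_hasDerivAt t h2

lemma contDiff_pzfun (hu : ContDiff ℝ 2 (Function.uncurry u)) :
    ContDiff ℝ 1 (fun p : ℝ × ℝ => fderiv ℝ (Function.uncurry u) p (1, 0)) :=
  (hu.fderiv_right (by norm_num)).clm_apply contDiff_const

lemma contDiff_ptfun (hu : ContDiff ℝ 2 (Function.uncurry u)) :
    ContDiff ℝ 1 (fun p : ℝ × ℝ => fderiv ℝ (Function.uncurry u) p (0, 1)) :=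
  (hu.fderiv_right (by norm_num)).clm_apply contDiff_const

lemma hasDerivAt_pz_z (hu : ContDiff ℝ 2 (Function.uncurry u)) (t z : ℝ) :
    HasDerivAt (fun w => pz u w t) (pzz u z t) z := by
  have h1 := (((contDiff_pzfun hu).differentiable one_ne_zero) (z, t)).hasFDerivAt
  have h2 : HasDerivAt (fun w : ℝ => (w, t)) ((1 : ℝ), (0 : ℝ)) z :=
    (hasDerivAt_id z).prodMk (hasDerivAt_const z t)
  exact h1.comp_hasDerivAt z h2

lemma hasDerivAt_pt_z (hu : ContDiff ℝ 2 (Function.uncurry u)) (t z : ℝ) :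
    HasDerivAt (fun w => pt u w t) (pzt u z t) z := by
  have h1 := (((contDiff_ptfun hu).differentiable one_ne_zero) (z, t)).hasFDerivAt
  have h2 : HasDerivAt (fun w : ℝ => (w, t)) ((1 : ℝ), (0 : ℝ)) z :=
    (hasDerivAt_id z).prodMk (hasDerivAt_const z t)
  exact h1.comp_hasDerivAt z h2

lemma hasDerivAt_pz_t (hu : ContDiff ℝ 2 (Function.uncurry u)) (z t : ℝ) :
    HasDerivAt (fun τ => pz u z τ) (ptz u z t) t := by
  have h1 := (((contDiff_pzfun hu).differentiable one_ne_zero) (z, t)).hasFDerivAt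
  have h2 : HasDerivAt (fun τ : ℝ => (z, τ)) ((0 : ℝ), (1 : ℝ)) t :=
    (hasDerivAt_const t z).prodMk (hasDerivAt_id t)
  exact h1.comp_hasDerivAt t h2

lemma deriv_z (hu : ContDiff ℝ 2 (Function.uncurry u)) (t z : ℝ) :
    deriv (fun w => u w t) z = pz u z t := (hasDerivAt_z hu t z).deriv

lemma deriv_t (hu : ContDiff ℝ 2 (Function.uncurry u)) (z t : ℝ) :
    deriv (u z) t = pt u z t := (hasDerivAt_t hu z t).deriv

lemma deriv_pt_z (hu : ContDiff ℝ 2 (Function.uncurry u)) (t z : ℝ) :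
    deriv (fun w => pt u w t) z = pzt u z t := (hasDerivAt_pt_z hu t z).deriv

lemma symm_mixed (hu : ContDiff ℝ 2 (Function.uncurry u)) (z t : ℝ) :
    pzt u z t = ptz u z t := by
  have hd : DifferentiableAt ℝ (fderiv ℝ (Function.uncurry u)) (z, t) :=
    ((hu.fderiv_right (m := 1) (by norm_num)).differentiable one_ne_zero) (z, t)
  have key : ∀ a b : ℝ × ℝ,
      fderiv ℝ (fun p : ℝ × ℝ => fderiv ℝ (Function.uncurry u) p a) (z, t) b
        = fderiv ℝ (fderiv ℝ (Function.uncurry u)) (z, t) b a := by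
    intro a b
    rw [fderiv_clm_apply hd (differentiableAt_const a)]
    simp
  have hs := (hu.contDiffAt (x := (z, t))).isSymmSndFDerivAt (by simp)
  rw [pzt, ptz, key, key]
  exact hs _ _

end TelegrapherAux


open MeasureTheory intervalIntegral Metric Set

namespace TelegrapherAux

variable {i v : ℝ → ℝ → ℝ}

noncomputable def Fint (R G : ℝ) (i v : ℝ → ℝ → ℝ) (τ z : ℝ) : ℝ :=
  R / 2 * i z τ ^ 2 + G / 2 * v z τ ^ 2 + v z τ * pz i z τ + 1 / G * pz i z τ ^ 2

noncomputable def Fder (R G : ℝ) (i v : ℝ → ℝ → ℝ) (τ z : ℝ) : ℝ :=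
  R * i z τ * pt i z τ + G * v z τ * pt v z τ + pt v z τ * pz i z τ
    + v z τ * ptz i z τ + 2 / G * (pz i z τ * ptz i z τ)

noncomputable def tgt (L C G : ℝ) (i v : ℝ → ℝ → ℝ) (t z : ℝ) : ℝ :=
  -L * pt i z t ^ 2 + 2 * C / G * pt i z t * pzt v z t - C * pt v z t ^ 2

noncomputable def bnd (G : ℝ) (i v : ℝ → ℝ → ℝ) (t z : ℝ) : ℝ :=
  (v z t + 2 / G * pz i z t) * pt i z t

noncomputable def bnd' (G : ℝ) (i v : ℝ → ℝ → ℝ) (t z : ℝ) : ℝ :=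
  (pz v z t + 2 / G * pzz i z t) * pt i z t + (v z t + 2 / G * pz i z t) * pzt i z t

section Cont

variable {u : ℝ → ℝ → ℝ}

lemma continuous_pzzfun (hu : ContDiff ℝ 2 (Function.uncurry u)) :
    Continuous (fun p : ℝ × ℝ =>
      fderiv ℝ (fun q : ℝ × ℝ => fderiv ℝ (Function.uncurry u) q (1, 0)) p (1, 0)) :=
  ((((contDiff_pzfun hu).fderiv_right (m := 0) (by norm_num)).clm_apply contDiff_const)).continuous

lemma continuous_ptzfun (hu : ContDiff ℝ 2 (Function.uncurry u)) :
    Continuous (fun p : ℝ × ℝ =>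
      fderiv ℝ (fun q : ℝ × ℝ => fderiv ℝ (Function.uncurry u) q (1, 0)) p (0, 1)) :=
  ((((contDiff_pzfun hu).fderiv_right (m := 0) (by norm_num)).clm_apply contDiff_const)).continuous

lemma continuous_pztfun (hu : ContDiff ℝ 2 (Function.uncurry u)) :
    Continuous (fun p : ℝ × ℝ =>
      fderiv ℝ (fun q : ℝ × ℝ => fderiv ℝ (Function.uncurry u) q (0, 1)) p (1, 0)) :=
  ((((contDiff_ptfun hu).fderiv_right (m := 0) (by norm_num)).clm_apply contDiff_const)).continuous

lemma cont_swap {f : ℝ × ℝ → ℝ} (hf : Continuous f) :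
    Continuous fun p : ℝ × ℝ => f (p.2, p.1) :=
  hf.comp (continuous_snd.prodMk continuous_fst)

lemma continuous_Fint (R G : ℝ) (hi : ContDiff ℝ 2 (Function.uncurry i))
    (hv : ContDiff ℝ 2 (Function.uncurry v)) :
    Continuous fun p : ℝ × ℝ => Fint R G i v p.1 p.2 := by
  have ci := cont_swap hi.continuous
  have cv := cont_swap hv.continuous
  have cpzi := cont_swap (contDiff_pzfun hi).continuous
  exact (((continuous_const.mul (ci.pow 2)).add (continuous_const.mul (cv.pow 2))).add
    (cv.mul cpzi)).add (continuous_const.mul (cpzi.pow 2))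

lemma continuous_Fder (R G : ℝ) (hi : ContDiff ℝ 2 (Function.uncurry i))
    (hv : ContDiff ℝ 2 (Function.uncurry v)) :
    Continuous fun p : ℝ × ℝ => Fder R G i v p.1 p.2 := by
  have ci := cont_swap hi.continuous
  have cv := cont_swap hv.continuous
  have cpzi := cont_swap (contDiff_pzfun hi).continuous
  have cpti := cont_swap (contDiff_ptfun hi).continuous
  have cptv := cont_swap (contDiff_ptfun hv).continuous
  have cptzi := cont_swap (continuous_ptzfun hi)
  exact (((((continuous_const.mul ci).mul cpti).add ((continuous_const.mul cv).mul cptv)).add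
    (cptv.mul cpzi)).add (cv.mul cptzi)).add (continuous_const.mul (cpzi.mul cptzi))

lemma continuous_tgt (L C G : ℝ) (hi : ContDiff ℝ 2 (Function.uncurry i))
    (hv : ContDiff ℝ 2 (Function.uncurry v)) :
    Continuous fun p : ℝ × ℝ => tgt L C G i v p.1 p.2 := by
  have cpti := cont_swap (contDiff_ptfun hi).continuous
  have cptv := cont_swap (contDiff_ptfun hv).continuous
  have cpztv := cont_swap (continuous_pztfun hv)
  exact ((continuous_const.mul (cpti.pow 2)).add
    ((continuous_const.mul cpti).mul cpztv)).sub (continuous_const.mul (cptv.pow 2))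

lemma continuous_bnd' (G : ℝ) (hi : ContDiff ℝ 2 (Function.uncurry i))
    (hv : ContDiff ℝ 2 (Function.uncurry v)) :
    Continuous fun p : ℝ × ℝ => bnd' G i v p.1 p.2 := by
  have cv := cont_swap hv.continuous
  have cpzv := cont_swap (contDiff_pzfun hv).continuous
  have cpzi := cont_swap (contDiff_pzfun hi).continuous
  have cpti := cont_swap (contDiff_ptfun hi).continuous
  have cpzzi := cont_swap (continuous_pzzfun hi)
  have cpzti := cont_swap (continuous_pztfun hi)
  exact ((cpzv.add (continuous_const.mul cpzzi)).mul cpti).add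
    ((cv.add (continuous_const.mul cpzi)).mul cpzti)

end Cont

lemma hasDerivAt_Fint (R G : ℝ) (hi : ContDiff ℝ 2 (Function.uncurry i))
    (hv : ContDiff ℝ 2 (Function.uncurry v)) (z τ : ℝ) :
    HasDerivAt (fun τ' => Fint R G i v τ' z) (Fder R G i v τ z) τ := by
  have hit := hasDerivAt_t hi z τ
  have hvt := hasDerivAt_t hv z τ
  have hizt := hasDerivAt_pz_t hi z τ
  have H := ((((hit.pow 2).const_mul (R / 2)).add ((hvt.pow 2).const_mul (G / 2))).add
    (hvt.mul hizt)).add ((hizt.pow 2).const_mul (1 / G))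
  refine H.congr_deriv ?_
  unfold Fder
  ring

lemma hasDerivAt_bnd (G : ℝ) (hi : ContDiff ℝ 2 (Function.uncurry i))
    (hv : ContDiff ℝ 2 (Function.uncurry v)) (t z : ℝ) :
    HasDerivAt (fun w => bnd G i v t w) (bnd' G i v t z) z := by
  have H := ((hasDerivAt_z hv t z).add ((hasDerivAt_pz_z hi t z).const_mul (2 / G))).mul
    (hasDerivAt_pt_z hi t z)
  exact H

end TelegrapherAux

open TelegrapherAux

/-- For the telegrapher's equations, the shaped potential
`P̃(t) = ∫₀¹ ((R/2)i² + (G/2)v² + v·∂i/∂z + (1/G)(∂i/∂z)²) dz` satisfies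
`dP̃/dt = ∫₀¹ (−L(∂i/∂t)² + (2C/G)(∂i/∂t)(∂²v/∂z∂t) − C(∂v/∂t)²) dz
  + [(v + (2/G)∂i/∂z)·(∂i/∂t)]₀¹`. -/
theorem shaped_potential_rate (L C R G : ℝ) (i v : ℝ → ℝ → ℝ)
    (hL : 0 < L) (hC : 0 < C) (hR : 0 < R) (hG : 0 < G)
    (hi : ContDiff ℝ 2 (Function.uncurry i)) (hv : ContDiff ℝ 2 (Function.uncurry v))
    (heq1 : ∀ t : ℝ, ∀ z ∈ Set.Icc (0:ℝ) 1,
      L * deriv (i z) t = -(deriv (fun w => v w t) z) - R * i z t)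
    (heq2 : ∀ t : ℝ, ∀ z ∈ Set.Icc (0:ℝ) 1,
      C * deriv (v z) t = -(deriv (fun w => i w t) z) - G * v z t) :
    ∀ t : ℝ,
      deriv (fun τ => ∫ z in (0:ℝ)..1,
          (R / 2 * (i z τ) ^ 2 + G / 2 * (v z τ) ^ 2
            + v z τ * deriv (fun w => i w τ) z
            + 1 / G * (deriv (fun w => i w τ) z) ^ 2)) t
        = (∫ z in (0:ℝ)..1,
            (-L * (deriv (i z) t) ^ 2
              + 2 * C / G * deriv (i z) t * deriv (fun w => deriv (v w) t) z
              - C * (deriv (v z) t) ^ 2))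
          + ((v 1 t + 2 / G * deriv (fun w => i w t) 1) * deriv (i 1) t
            - (v 0 t + 2 / G * deriv (fun w => i w t) 0) * deriv (i 0) t) := by
  intro t
  simp only [TelegrapherAux.deriv_z hi, TelegrapherAux.deriv_t hi, TelegrapherAux.deriv_t hv,
    TelegrapherAux.deriv_pt_z hv]
  simp only [TelegrapherAux.deriv_z hv, TelegrapherAux.deriv_t hi] at heq1
  simp only [TelegrapherAux.deriv_z hi, TelegrapherAux.deriv_t hv] at heq2
  -- continuity facts
  have cF := continuous_Fint R G hi hv
  have cF' := continuous_Fder R G hi hv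
  have ctgt : Continuous fun z => tgt L C G i v t z :=
    (continuous_tgt L C G hi hv).comp (continuous_const.prodMk continuous_id)
  have cbnd' : Continuous fun z => bnd' G i v t z :=
    (continuous_bnd' G hi hv).comp (continuous_const.prodMk continuous_id)
  -- bound on compact set
  obtain ⟨M, hM⟩ := ((isCompact_closedBall t 1).prod (isCompact_Icc (a := (0:ℝ)) (b := 1))
    ).exists_bound_of_continuousOn cF'.continuousOn
  -- differentiation under the integral sign
  have hD := intervalIntegral.hasDerivAt_integral_of_dominated_loc_of_deriv_le
    (F := fun τ z => Fint R G i v τ z) (F' := fun τ z => Fder R G i v τ z)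
    (x₀ := t) (a := (0:ℝ)) (b := 1) (bound := fun _ => M) (μ := volume) (ball_mem_nhds t zero_lt_one)
    (Filter.Eventually.of_forall fun x =>
      ((cF.comp (continuous_const.prodMk continuous_id)).aestronglyMeasurable
        : AEStronglyMeasurable (fun z => Fint R G i v x z) _))
    ((cF.comp (continuous_const.prodMk continuous_id)).intervalIntegrable 0 1)
    ((cF'.comp (continuous_const.prodMk continuous_id)).aestronglyMeasurable)
    (Filter.Eventually.of_forall fun z hz x hx => by
      refine hM (x, z) ⟨ball_subset_closedBall hx, ?_⟩
      rw [Set.uIoc_of_le zero_le_one] at hz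
      exact ⟨hz.1.le, hz.2⟩)
    (intervalIntegrable_const)
    (Filter.Eventually.of_forall fun z _ x _ => hasDerivAt_Fint R G hi hv z x)
  have hDt : deriv (fun τ => ∫ z in (0:ℝ)..1,
      (R / 2 * i z τ ^ 2 + G / 2 * v z τ ^ 2 + v z τ * pz i z τ + 1 / G * pz i z τ ^ 2)) t
      = ∫ z in (0:ℝ)..1, Fder R G i v t z := hD.2.deriv
  rw [hDt]
  -- pointwise identity on the interior
  have key : ∀ z ∈ Set.Ioo (0:ℝ) 1, Fder R G i v t z = tgt L C G i v t z + bnd' G i v t z := by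
    intro z hz
    have h1 := heq1 t z ⟨hz.1.le, hz.2.le⟩
    have h2 := heq2 t z ⟨hz.1.le, hz.2.le⟩
    have h3 : C * pzt v z t = -(pzz i z t) - G * pz v z t := by
      have hmem : Set.Icc (0:ℝ) 1 ∈ nhds z := Icc_mem_nhds hz.1 hz.2
      have heqf : (fun w => C * pt v w t) =ᶠ[nhds z] fun w => -(pz i w t) - G * v w t := by
        filter_upwards [hmem] with w hw using heq2 t w hw
      have hde := heqf.deriv_eq
      rw [((hasDerivAt_pt_z hv t z).const_mul C).deriv,
        (show HasDerivAt (fun w => -pz i w t - G * v w t) (-pzz i z t - G * pz v z t) z from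
          ((hasDerivAt_pz_z hi t z).neg).sub ((hasDerivAt_z hv t z).const_mul G)).deriv] at hde
      exact hde
    have hsym := symm_mixed hi z t
    have hG' : G ≠ 0 := ne_of_gt hG
    unfold Fder tgt bnd'
    rw [← hsym]
    have hGinv : G * G⁻¹ = 1 := mul_inv_cancel₀ hG'
    linear_combination (pt i z t) * h1 + (pt v z t) * h2 - 2 / G * (pt i z t) * h3
      + 2 * pt i z t * pz v z t * hGinv
  -- rearrange the integral
  have hsplit : ∫ z in (0:ℝ)..1, Fder R G i v t z
      = (∫ z in (0:ℝ)..1, tgt L C G i v t z) + ∫ z in (0:ℝ)..1, bnd' G i v t z := by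
    rw [← intervalIntegral.integral_add (ctgt.intervalIntegrable 0 1)
      (cbnd'.intervalIntegrable 0 1)]
    apply intervalIntegral.integral_congr_ae
    have hne : ∀ᵐ z : ℝ, z ≠ (1:ℝ) := by
      rw [MeasureTheory.ae_iff]
      simp only [not_not, Set.setOf_eq_eq_singleton]
      exact Real.volume_singleton
    filter_upwards [hne] with z hz1 hzI
    rw [Set.uIoc_of_le zero_le_one] at hzI
    exact key z ⟨hzI.1, lt_of_le_of_ne hzI.2 hz1⟩
  have hftc : ∫ z in (0:ℝ)..1, bnd' G i v t z = bnd G i v t 1 - bnd G i v t 0 :=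
    intervalIntegral.integral_eq_sub_of_hasDerivAt (fun z _ => hasDerivAt_bnd G hi hv t z)
      (cbnd'.intervalIntegrable 0 1)
  rw [hsplit, hftc]
  rfl
end

section
/- Let i, v : [0,1] × ℝ → ℝ be smooth (at least C²) and satisfy the telegrapher's equations L·∂i/∂t = −∂v/∂z − R·i and C·∂v/∂t = −∂i/∂z − G·v on [0,1] × ℝ, with constants L, C, R, G > 0. Assume (a) (∂i/∂t)(0,t) = (∂i/∂t)(1,t) = 0 for all t (zero boundary energy flow), and (b) for all t, ∫₀¹ (∂²v/∂z∂t)² dz ≤ (G²·L/C)·∫₀¹ (∂v/∂t)² dz (the condition √(C/L)/G·‖∂/∂z‖ ≤ 1). Then the shaped mixed potential P̃(t) = ∫₀¹ ( (R/2)·i² + (G/2)·v² + v·(∂i/∂z) + (1/G)·(∂i/∂z)² ) dz is nonincreasing in t: dP̃/dt ≤ 0 for all t. -/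
open Function MeasureTheory intervalIntegral

noncomputable def pd1 (f : ℝ → ℝ → ℝ) (u : ℝ × ℝ) (p : ℝ × ℝ) : ℝ :=
  fderiv ℝ (Function.uncurry f) p u

noncomputable def pd2 (f : ℝ → ℝ → ℝ) (a b : ℝ × ℝ) (p : ℝ × ℝ) : ℝ :=
  fderiv ℝ (fderiv ℝ (Function.uncurry f)) p a b

lemma curve_z (t z : ℝ) : HasDerivAt (fun w : ℝ => (w, t)) ((1:ℝ), (0:ℝ)) z :=
  (hasDerivAt_id z).prodMk (hasDerivAt_const z t)

lemma curve_t (z t : ℝ) : HasDerivAt (fun τ : ℝ => (z, τ)) ((0:ℝ), (1:ℝ)) t :=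
  (hasDerivAt_const t z).prodMk (hasDerivAt_id t)

variable {f : ℝ → ℝ → ℝ}

lemma hd_z (hf : ContDiff ℝ 2 (uncurry f)) (z t : ℝ) :
    HasDerivAt (fun w => f w t) (pd1 f (1, 0) (z, t)) z := by
  have h := ((hf.differentiable (by norm_num)) (z, t)).hasFDerivAt
  simpa [Function.comp_def, Function.uncurry, pd1] using h.comp_hasDerivAt z (curve_z t z)

lemma hd_t (hf : ContDiff ℝ 2 (uncurry f)) (z t : ℝ) :
    HasDerivAt (fun τ => f z τ) (pd1 f (0, 1) (z, t)) t := by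
  have h := ((hf.differentiable (by norm_num)) (z, t)).hasFDerivAt
  simpa [Function.comp_def, Function.uncurry, pd1] using h.comp_hasDerivAt t (curve_t z t)

lemma contDiff_fderiv1 (hf : ContDiff ℝ 2 (uncurry f)) :
    ContDiff ℝ 1 (fderiv ℝ (uncurry f)) :=
  hf.fderiv_right (by norm_num)

lemma hd2_z (hf : ContDiff ℝ 2 (uncurry f)) (u : ℝ × ℝ) (z t : ℝ) :
    HasDerivAt (fun w => pd1 f u (w, t)) (pd2 f (1, 0) u (z, t)) z := by
  have h := (((contDiff_fderiv1 hf).differentiable one_ne_zero) (z, t)).hasFDerivAt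
  have h1 : HasDerivAt (fun w => fderiv ℝ (uncurry f) (w, t))
      (fderiv ℝ (fderiv ℝ (uncurry f)) (z, t) (1, 0)) z := h.comp_hasDerivAt z (curve_z t z)
  have h2 := h1.clm_apply (hasDerivAt_const z u)
  simpa [Function.comp, pd1, pd2] using h2

lemma hd2_t (hf : ContDiff ℝ 2 (uncurry f)) (u : ℝ × ℝ) (z t : ℝ) :
    HasDerivAt (fun τ => pd1 f u (z, τ)) (pd2 f (0, 1) u (z, t)) t := by
  have h := (((contDiff_fderiv1 hf).differentiable one_ne_zero) (z, t)).hasFDerivAt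
  have h2 := (h.comp_hasDerivAt t (curve_t z t)).clm_apply (hasDerivAt_const t u)
  simpa [Function.comp, pd1, pd2] using h2

lemma pd2_symm (hf : ContDiff ℝ 2 (uncurry f)) (a b : ℝ × ℝ) (p : ℝ × ℝ) :
    pd2 f a b p = pd2 f b a p :=
  second_derivative_symmetric
    (fun y => ((hf.differentiable (by norm_num)) y).hasFDerivAt)
    ((((contDiff_fderiv1 hf).differentiable one_ne_zero) p).hasFDerivAt) a b

lemma cont_pd1 (hf : ContDiff ℝ 2 (uncurry f)) (u : ℝ × ℝ) : Continuous (pd1 f u) :=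
  ((contDiff_fderiv1 hf).clm_apply contDiff_const).continuous

lemma cont_pd2 (hf : ContDiff ℝ 2 (uncurry f)) (a b : ℝ × ℝ) : Continuous (pd2 f a b) := by
  have h0 : ContDiff ℝ 0 (fderiv ℝ (fderiv ℝ (uncurry f))) :=
    (contDiff_fderiv1 hf).fderiv_right (by norm_num)
  exact ((h0.clm_apply contDiff_const).clm_apply contDiff_const).continuous

/-- Under zero boundary energy flow `(∂i/∂t)(0,t) = (∂i/∂t)(1,t) = 0`
and the operator-norm condition
`∫₀¹ (∂²v/∂z∂t)² dz ≤ (G²L/C)·∫₀¹ (∂v/∂t)² dz` (i.e. `√(C/L)/G·‖∂/∂z‖ ≤ 1`),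
the shaped potential `P̃(t)` of the transmission line is nonincreasing. -/
theorem shaped_potential_nonincreasing (L C R G : ℝ) (i v : ℝ → ℝ → ℝ)
    (hL : 0 < L) (hC : 0 < C) (hR : 0 < R) (hG : 0 < G)
    (hi : ContDiff ℝ 2 (Function.uncurry i)) (hv : ContDiff ℝ 2 (Function.uncurry v))
    (heq1 : ∀ t : ℝ, ∀ z ∈ Set.Icc (0:ℝ) 1,
      L * deriv (i z) t = -(deriv (fun w => v w t) z) - R * i z t)
    (heq2 : ∀ t : ℝ, ∀ z ∈ Set.Icc (0:ℝ) 1,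
      C * deriv (v z) t = -(deriv (fun w => i w t) z) - G * v z t)
    (hbd : ∀ t : ℝ, deriv (i 0) t = 0 ∧ deriv (i 1) t = 0)
    (hop : ∀ t : ℝ,
      (∫ z in (0:ℝ)..1, (deriv (fun w => deriv (v w) t) z) ^ 2)
        ≤ G ^ 2 * L / C * ∫ z in (0:ℝ)..1, (deriv (v z) t) ^ 2) :
    ∀ t : ℝ,
      deriv (fun τ => ∫ z in (0:ℝ)..1,
          (R / 2 * (i z τ) ^ 2 + G / 2 * (v z τ) ^ 2
            + v z τ * deriv (fun w => i w τ) z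
            + 1 / G * (deriv (fun w => i w τ) z) ^ 2)) t ≤ 0 := by
  intro t
  -- notation for partial derivatives
  have hiz : ∀ (τ z : ℝ), deriv (fun w => i w τ) z = pd1 i (1, 0) (z, τ) :=
    fun τ z => (hd_z hi z τ).deriv
  have hit : ∀ (z τ : ℝ), deriv (i z) τ = pd1 i (0, 1) (z, τ) :=
    fun z τ => (hd_t hi z τ).deriv
  have hvz : ∀ (τ z : ℝ), deriv (fun w => v w τ) z = pd1 v (1, 0) (z, τ) :=
    fun τ z => (hd_z hv z τ).deriv
  have hvt : ∀ (z τ : ℝ), deriv (v z) τ = pd1 v (0, 1) (z, τ) :=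
    fun z τ => (hd_t hv z τ).deriv
  simp only [hiz]
  -- continuity facts
  have czc : ∀ τ : ℝ, Continuous fun z : ℝ => (z, τ) :=
    fun τ => continuous_id.prodMk continuous_const
  have ctc : ∀ z : ℝ, Continuous fun τ : ℝ => (z, τ) :=
    fun z => continuous_const.prodMk continuous_id
  have ci : Continuous fun p : ℝ × ℝ => i p.1 p.2 := hi.continuous
  have cv : Continuous fun p : ℝ × ℝ => v p.1 p.2 := hv.continuous
  have cit := cont_pd1 hi ((0:ℝ), (1:ℝ))
  have ciz := cont_pd1 hi ((1:ℝ), (0:ℝ))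
  have cvt := cont_pd1 hv ((0:ℝ), (1:ℝ))
  have cvz := cont_pd1 hv ((1:ℝ), (0:ℝ))
  have cizt := cont_pd2 hi ((0:ℝ), (1:ℝ)) ((1:ℝ), (0:ℝ))
  have cizt' := cont_pd2 hi ((1:ℝ), (0:ℝ)) ((0:ℝ), (1:ℝ))
  have cvtz := cont_pd2 hv ((1:ℝ), (0:ℝ)) ((0:ℝ), (1:ℝ))
  -- joint continuity of the pointwise time derivative of the integrand
  have contD : Continuous fun p : ℝ × ℝ =>
      R * (i p.1 p.2 * pd1 i (0, 1) p) + G * (v p.1 p.2 * pd1 v (0, 1) p)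
        + (pd1 v (0, 1) p * pd1 i (1, 0) p + v p.1 p.2 * pd2 i (0, 1) (1, 0) p)
        + 2 / G * (pd1 i (1, 0) p * pd2 i (0, 1) (1, 0) p) :=
    ((((continuous_const.mul (ci.mul cit)).add
        (continuous_const.mul (cv.mul cvt))).add
      ((cvt.mul ciz).add (cv.mul cizt))).add
        (continuous_const.mul (ciz.mul cizt)))
  -- bound on a compact neighbourhood
  obtain ⟨M, hM⟩ := ((isCompact_Icc (a := (0:ℝ)) (b := 1)).prod
      (isCompact_Icc (a := t - 1) (b := t + 1))).exists_bound_of_continuousOn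
      contD.continuousOn
  -- derivative of the integrand in τ
  have hderiv : ∀ (z τ : ℝ), HasDerivAt
      (fun σ => R / 2 * i z σ ^ 2 + G / 2 * v z σ ^ 2 + v z σ * pd1 i (1, 0) (z, σ)
        + 1 / G * pd1 i (1, 0) (z, σ) ^ 2)
      (R * (i z τ * pd1 i (0, 1) (z, τ)) + G * (v z τ * pd1 v (0, 1) (z, τ))
        + (pd1 v (0, 1) (z, τ) * pd1 i (1, 0) (z, τ) + v z τ * pd2 i (0, 1) (1, 0) (z, τ))
        + 2 / G * (pd1 i (1, 0) (z, τ) * pd2 i (0, 1) (1, 0) (z, τ))) τ := by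
    intro z τ
    have h1 := hd_t hi z τ
    have h2 := hd_t hv z τ
    have h3 := hd2_t hi (1, 0) z τ
    have h := ((((h1.pow 2).const_mul (R / 2)).add ((h2.pow 2).const_mul (G / 2))).add
      ((h2.mul h3))).add (((h3.pow 2).const_mul (1 / G)))
    refine h.congr_deriv ?_
    ring
  -- differentiate under the integral sign
  have hP := intervalIntegral.hasDerivAt_integral_of_dominated_loc_of_deriv_le
      (μ := MeasureTheory.volume) (a := (0:ℝ)) (b := 1) (x₀ := t) (s := Metric.ball t 1)
      (F := fun τ z => R / 2 * i z τ ^ 2 + G / 2 * v z τ ^ 2 + v z τ * pd1 i (1, 0) (z, τ)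
        + 1 / G * pd1 i (1, 0) (z, τ) ^ 2)
      (F' := fun τ z => R * (i z τ * pd1 i (0, 1) (z, τ)) + G * (v z τ * pd1 v (0, 1) (z, τ))
        + (pd1 v (0, 1) (z, τ) * pd1 i (1, 0) (z, τ) + v z τ * pd2 i (0, 1) (1, 0) (z, τ))
        + 2 / G * (pd1 i (1, 0) (z, τ) * pd2 i (0, 1) (1, 0) (z, τ)))
      (bound := fun _ => M) (Metric.ball_mem_nhds t one_pos)
      (Filter.Eventually.of_forall fun τ => by
        have : Continuous fun z => R / 2 * i z τ ^ 2 + G / 2 * v z τ ^ 2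
            + v z τ * pd1 i (1, 0) (z, τ) + 1 / G * pd1 i (1, 0) (z, τ) ^ 2 := by
          have cvi := ci.comp (czc τ)
          have cvv := cv.comp (czc τ)
          have cviz := ciz.comp (czc τ)
          exact (((continuous_const.mul (cvi.pow 2)).add
            (continuous_const.mul (cvv.pow 2))).add (cvv.mul cviz)).add
            (continuous_const.mul (cviz.pow 2))
        exact this.aestronglyMeasurable)
      (by
        have : Continuous fun z => R / 2 * i z t ^ 2 + G / 2 * v z t ^ 2
            + v z t * pd1 i (1, 0) (z, t) + 1 / G * pd1 i (1, 0) (z, t) ^ 2 := by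
          have cvi := ci.comp (czc t)
          have cvv := cv.comp (czc t)
          have cviz := ciz.comp (czc t)
          exact (((continuous_const.mul (cvi.pow 2)).add
            (continuous_const.mul (cvv.pow 2))).add (cvv.mul cviz)).add
            (continuous_const.mul (cviz.pow 2))
        exact this.intervalIntegrable 0 1)
      ((contD.comp (czc t)).aestronglyMeasurable)
      (MeasureTheory.ae_of_all _ fun z hz x hx => by
        rw [Set.uIoc_of_le (by norm_num : (0:ℝ) ≤ 1)] at hz
        have hx' : x ∈ Set.Icc (t - 1) (t + 1) := by
          have := Metric.mem_ball.mp hx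
          rw [Real.dist_eq] at this
          obtain ⟨h1, h2⟩ := abs_lt.mp this
          exact ⟨by linarith, by linarith⟩
        exact hM (z, x) ⟨Set.Ioc_subset_Icc_self hz, hx'⟩)
      intervalIntegrable_const
      (MeasureTheory.ae_of_all _ fun z hz x hx => hderiv z x)
  rw [hP.2.deriv]
  -- now show the integral of the time-derivative is nonpositive
  -- pointwise rewriting using the telegrapher equations
  have hkey : ∀ z ∈ Set.Icc (0:ℝ) 1,
      R * (i z t * pd1 i (0, 1) (z, t)) + G * (v z t * pd1 v (0, 1) (z, t))
        + (pd1 v (0, 1) (z, t) * pd1 i (1, 0) (z, t) + v z t * pd2 i (0, 1) (1, 0) (z, t))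
        + 2 / G * (pd1 i (1, 0) (z, t) * pd2 i (0, 1) (1, 0) (z, t))
      = (-(L * pd1 i (0, 1) (z, t) ^ 2) - C * pd1 v (0, 1) (z, t) ^ 2)
        + (-(pd1 v (1, 0) (z, t) * pd1 i (0, 1) (z, t)
              + v z t * pd2 i (1, 0) (0, 1) (z, t)))
        + (-(2 * C / G * (pd1 v (0, 1) (z, t) * pd2 i (1, 0) (0, 1) (z, t)))) := by
    intro z hz
    have h1 := heq1 t z hz
    rw [hit, hvz] at h1
    have h2 := heq2 t z hz
    rw [hvt, hiz] at h2
    rw [pd2_symm hi (0, 1) (1, 0) (z, t)]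
    have hG' : G ≠ 0 := ne_of_gt hG
    field_simp
    linear_combination (G * pd1 i (0, 1) (z, t)) * h1
      + (G * pd1 v (0, 1) (z, t) + 2 * pd2 i (1, 0) (0, 1) (z, t)) * h2
  rw [intervalIntegral.integral_congr (g := fun z =>
      (-(L * pd1 i (0, 1) (z, t) ^ 2) - C * pd1 v (0, 1) (z, t) ^ 2)
        + (-(pd1 v (1, 0) (z, t) * pd1 i (0, 1) (z, t)
              + v z t * pd2 i (1, 0) (0, 1) (z, t)))
        + (-(2 * C / G * (pd1 v (0, 1) (z, t) * pd2 i (1, 0) (0, 1) (z, t)))))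
    (fun z hz => hkey z (by rwa [Set.uIcc_of_le (by norm_num : (0:ℝ) ≤ 1)] at hz))]
  -- one-variable continuity at time t
  have c1 : Continuous fun z => pd1 i (0, 1) (z, t) := cit.comp (czc t)
  have c2 : Continuous fun z => pd1 v (0, 1) (z, t) := cvt.comp (czc t)
  have c3 : Continuous fun z => pd1 v (1, 0) (z, t) := cvz.comp (czc t)
  have c4 : Continuous fun z => pd2 i (1, 0) (0, 1) (z, t) := cizt'.comp (czc t)
  have c5 : Continuous fun z => pd2 v (1, 0) (0, 1) (z, t) := cvtz.comp (czc t)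
  have c6 : Continuous fun z => v z t := cv.comp (czc t)
  -- split the integral
  have intA : IntervalIntegrable
      (fun z => -(L * pd1 i (0, 1) (z, t) ^ 2) - C * pd1 v (0, 1) (z, t) ^ 2)
      MeasureTheory.volume 0 1 :=
    (((continuous_const.mul (c1.pow 2)).neg).sub
      (continuous_const.mul (c2.pow 2))).intervalIntegrable 0 1
  have intB : IntervalIntegrable
      (fun z => -(pd1 v (1, 0) (z, t) * pd1 i (0, 1) (z, t)
        + v z t * pd2 i (1, 0) (0, 1) (z, t))) MeasureTheory.volume 0 1 :=
    (((c3.mul c1).add (c6.mul c4)).neg).intervalIntegrable 0 1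
  have intD : IntervalIntegrable
      (fun z => -(2 * C / G * (pd1 v (0, 1) (z, t) * pd2 i (1, 0) (0, 1) (z, t))))
      MeasureTheory.volume 0 1 :=
    ((continuous_const.mul (c2.mul c4)).neg).intervalIntegrable 0 1
  rw [intervalIntegral.integral_add (intA.add intB) intD,
    intervalIntegral.integral_add intA intB]
  -- boundary values of ∂i/∂t vanish
  have hb0 : pd1 i (0, 1) (0, t) = 0 := by rw [← hit]; exact (hbd t).1
  have hb1 : pd1 i (0, 1) (1, t) = 0 := by rw [← hit]; exact (hbd t).2
  -- first integration by parts: ∫ ∂z(v · i_t) = 0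
  have ibp1 : ∫ z in (0:ℝ)..1, (pd1 v (1, 0) (z, t) * pd1 i (0, 1) (z, t)
      + v z t * pd2 i (1, 0) (0, 1) (z, t)) = 0 := by
    have h := intervalIntegral.integral_eq_sub_of_hasDerivAt
      (f := fun z => v z t * pd1 i (0, 1) (z, t))
      (f' := fun z => pd1 v (1, 0) (z, t) * pd1 i (0, 1) (z, t)
        + v z t * pd2 i (1, 0) (0, 1) (z, t))
      (fun z _ => (hd_z hv z t).mul (hd2_z hi (0, 1) z t))
      (((c3.mul c1).add (c6.mul c4)).intervalIntegrable 0 1)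
    rw [h]
    simp [hb0, hb1]
  -- second integration by parts: ∫ ∂z(v_t · i_t) = 0
  have ibp2 : ∫ z in (0:ℝ)..1, (pd2 v (1, 0) (0, 1) (z, t) * pd1 i (0, 1) (z, t)
      + pd1 v (0, 1) (z, t) * pd2 i (1, 0) (0, 1) (z, t)) = 0 := by
    have h := intervalIntegral.integral_eq_sub_of_hasDerivAt
      (f := fun z => pd1 v (0, 1) (z, t) * pd1 i (0, 1) (z, t))
      (f' := fun z => pd2 v (1, 0) (0, 1) (z, t) * pd1 i (0, 1) (z, t)
        + pd1 v (0, 1) (z, t) * pd2 i (1, 0) (0, 1) (z, t))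
      (fun z _ => (hd2_z hv (0, 1) z t).mul (hd2_z hi (0, 1) z t))
      (((c5.mul c1).add (c2.mul c4)).intervalIntegrable 0 1)
    rw [h]
    simp [hb0, hb1]
  have hswap : ∫ z in (0:ℝ)..1, pd1 v (0, 1) (z, t) * pd2 i (1, 0) (0, 1) (z, t)
      = -∫ z in (0:ℝ)..1, pd2 v (1, 0) (0, 1) (z, t) * pd1 i (0, 1) (z, t) := by
    have hsplit := intervalIntegral.integral_add (μ := MeasureTheory.volume) (a := (0:ℝ)) (b := 1)
      (f := fun z => pd2 v (1, 0) (0, 1) (z, t) * pd1 i (0, 1) (z, t))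
      (g := fun z => pd1 v (0, 1) (z, t) * pd2 i (1, 0) (0, 1) (z, t))
      ((c5.mul c1).intervalIntegrable 0 1) ((c2.mul c4).intervalIntegrable 0 1)
    rw [ibp2] at hsplit
    linarith
  -- name the basic integrals
  set S1 := ∫ z in (0:ℝ)..1, pd1 i (0, 1) (z, t) ^ 2 with hS1
  set S2 := ∫ z in (0:ℝ)..1, pd1 v (0, 1) (z, t) ^ 2 with hS2
  set S3 := ∫ z in (0:ℝ)..1, pd2 v (1, 0) (0, 1) (z, t) ^ 2 with hS3
  set T := ∫ z in (0:ℝ)..1, pd2 v (1, 0) (0, 1) (z, t) * pd1 i (0, 1) (z, t) with hT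
  -- evaluate the three pieces
  have hA : ∫ z in (0:ℝ)..1,
      (-(L * pd1 i (0, 1) (z, t) ^ 2) - C * pd1 v (0, 1) (z, t) ^ 2)
      = -(L * S1) - C * S2 := by
    rw [intervalIntegral.integral_sub (f := fun z => -(L * pd1 i (0, 1) (z, t) ^ 2))
        (g := fun z => C * pd1 v (0, 1) (z, t) ^ 2) ((continuous_const.mul (c1.pow 2)).neg.intervalIntegrable 0 1)
        ((continuous_const.mul (c2.pow 2)).intervalIntegrable 0 1),
      intervalIntegral.integral_neg, intervalIntegral.integral_const_mul,
      intervalIntegral.integral_const_mul]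
  have hB : ∫ z in (0:ℝ)..1, -(pd1 v (1, 0) (z, t) * pd1 i (0, 1) (z, t)
      + v z t * pd2 i (1, 0) (0, 1) (z, t)) = 0 := by
    rw [intervalIntegral.integral_neg, ibp1, neg_zero]
  have hD : ∫ z in (0:ℝ)..1,
      -(2 * C / G * (pd1 v (0, 1) (z, t) * pd2 i (1, 0) (0, 1) (z, t)))
      = 2 * C / G * T := by
    rw [intervalIntegral.integral_neg, intervalIntegral.integral_const_mul, hswap]
    ring
  rw [hA, hB, hD]
  -- the operator-norm hypothesis in pd-form
  have hop' : S3 ≤ G ^ 2 * L / C * S2 := by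
    have h := hop t
    simp only [hvt] at h
    have h2 : ∀ z : ℝ, deriv (fun w => pd1 v (0, 1) (w, t)) z
        = pd2 v (1, 0) (0, 1) (z, t) := fun z => (hd2_z hv (0, 1) z t).deriv
    simpa only [h2, hS1, hS2, hS3] using h
  -- pointwise Cauchy–Schwarz / AM-GM bound
  have hmono : 2 * C / G * T ≤ L * S1 + C ^ 2 / (G ^ 2 * L) * S3 := by
    have hpoint : ∀ z ∈ Set.Icc (0:ℝ) 1,
        2 * C / G * (pd2 v (1, 0) (0, 1) (z, t) * pd1 i (0, 1) (z, t))
          ≤ L * pd1 i (0, 1) (z, t) ^ 2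
            + C ^ 2 / (G ^ 2 * L) * pd2 v (1, 0) (0, 1) (z, t) ^ 2 := by
      intro z _
      set a := pd1 i (0, 1) (z, t)
      set b := pd2 v (1, 0) (0, 1) (z, t)
      rw [← sub_nonneg]
      have hrw : L * a ^ 2 + C ^ 2 / (G ^ 2 * L) * b ^ 2 - 2 * C / G * (b * a)
          = (L * a - C / G * b) ^ 2 / L := by
        field_simp
        ring
      rw [hrw]
      positivity
    have h := intervalIntegral.integral_mono_on (μ := MeasureTheory.volume)
      (f := fun z => 2 * C / G * (pd2 v (1, 0) (0, 1) (z, t) * pd1 i (0, 1) (z, t)))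
      (g := fun z => L * pd1 i (0, 1) (z, t) ^ 2
        + C ^ 2 / (G ^ 2 * L) * pd2 v (1, 0) (0, 1) (z, t) ^ 2) (by norm_num : (0:ℝ) ≤ 1)
      ((continuous_const.mul (c5.mul c1)).intervalIntegrable 0 1)
      (((continuous_const.mul (c1.pow 2)).add
        (continuous_const.mul (c5.pow 2))).intervalIntegrable 0 1) hpoint
    rw [intervalIntegral.integral_const_mul] at h
    rw [intervalIntegral.integral_add (f := fun z => L * pd1 i (0, 1) (z, t) ^ 2)
      (g := fun z => C ^ 2 / (G ^ 2 * L) * pd2 v (1, 0) (0, 1) (z, t) ^ 2)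
      ((continuous_const.mul (c1.pow 2)).intervalIntegrable 0 1)
      ((continuous_const.mul (c5.pow 2)).intervalIntegrable 0 1),
      intervalIntegral.integral_const_mul, intervalIntegral.integral_const_mul] at h
    exact h
  -- combine
  have hS3' : C ^ 2 / (G ^ 2 * L) * S3 ≤ C * S2 := by
    have hc : (0:ℝ) ≤ C ^ 2 / (G ^ 2 * L) := by positivity
    have := mul_le_mul_of_nonneg_left hop' hc
    have hid : C ^ 2 / (G ^ 2 * L) * (G ^ 2 * L / C * S2) = C * S2 := by
      field_simp
    linarith [hid ▸ this]
  linarith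
end

section
/- Let G, R, K > 0, let i* : [0,1] → ℝ be continuously differentiable and v* : [0,1] → ℝ continuous with G·v*(z) + (i*)′(z) = 0 for all z ∈ [0,1]. For i ∈ C¹([0,1]) and v ∈ C⁰([0,1]) define P_d(i,v) = (1/(2G))·∫₀¹ [ (G·v + i′)² + G·(K + R)·(i − i*)² + (G·v* + i′)² ] dz. Then P_d(i,v) ≥ 0 for all (i,v), and P_d(i,v) = 0 if and only if i = i* and v = v* on [0,1]; i.e., P_d has a strict global minimum at the desired equilibrium profile (i*, v*). -/
/-- The closed-loop shaped potential
`P_d(i,v) = (1/(2G))∫₀¹ [(G·v + i′)² + G(K+R)(i − i*)² + (G·v* + i′)²] dz`,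
with target profiles satisfying `G·v* + (i*)′ = 0` on `[0,1]`, is nonnegative
and vanishes iff `i = i*` and `v = v*` on `[0,1]`. -/
theorem closed_loop_potential_min (G R K : ℝ) (hG : 0 < G) (hR : 0 < R) (hK : 0 < K)
    (istar vstar : ℝ → ℝ) (histar : ContDiff ℝ 1 istar) (hvstar : Continuous vstar)
    (heq : ∀ z ∈ Set.Icc (0:ℝ) 1, G * vstar z + deriv istar z = 0) :
    ∀ (i v : ℝ → ℝ), ContDiff ℝ 1 i → Continuous v →
      (0 ≤ 1 / (2 * G) * ∫ z in (0:ℝ)..1,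
          ((G * v z + deriv i z) ^ 2 + G * (K + R) * (i z - istar z) ^ 2
            + (G * vstar z + deriv i z) ^ 2))
      ∧ ((1 / (2 * G) * ∫ z in (0:ℝ)..1,
          ((G * v z + deriv i z) ^ 2 + G * (K + R) * (i z - istar z) ^ 2
            + (G * vstar z + deriv i z) ^ 2)) = 0
          ↔ ∀ z ∈ Set.Icc (0:ℝ) 1, i z = istar z ∧ v z = vstar z) := by
  intro i v hi hv
  set f : ℝ → ℝ := fun z =>
    (G * v z + deriv i z) ^ 2 + G * (K + R) * (i z - istar z) ^ 2
      + (G * vstar z + deriv i z) ^ 2 with hf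
  have hderiv : Continuous (deriv i) := hi.continuous_deriv le_rfl
  have hderivstar : Continuous (deriv istar) := histar.continuous_deriv le_rfl
  have hfc : Continuous f := by
    apply Continuous.add
    apply Continuous.add
    · exact ((continuous_const.mul hv).add hderiv).pow 2
    · exact continuous_const.mul (((hi.continuous).sub histar.continuous).pow 2)
    · exact ((continuous_const.mul hvstar).add hderiv).pow 2
  have hfnn : ∀ z, 0 ≤ f z := by
    intro z
    have h1 : 0 ≤ G * (K + R) * (i z - istar z) ^ 2 := by positivity
    have h2 : 0 ≤ (G * v z + deriv i z) ^ 2 := sq_nonneg _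
    have h3 : 0 ≤ (G * vstar z + deriv i z) ^ 2 := sq_nonneg _
    simp only [hf]; linarith
  have hGpos : (0:ℝ) < 1 / (2 * G) := by positivity
  have hint : 0 ≤ ∫ z in (0:ℝ)..1, f z :=
    intervalIntegral.integral_nonneg (by norm_num) (fun u _ => hfnn u)
  refine ⟨mul_nonneg hGpos.le hint, ?_⟩
  constructor
  · intro h0
    have hint0 : ∫ z in (0:ℝ)..1, f z = 0 := by
      rcases mul_eq_zero.mp h0 with h | h
      · exact absurd h hGpos.ne'
      · exact h
    have hae : f =ᵐ[MeasureTheory.volume.restrict (Set.Ioc (0:ℝ) 1)] 0 := by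
      rw [← intervalIntegral.integral_eq_zero_iff_of_le_of_nonneg_ae (by norm_num)
        (Filter.Eventually.of_forall hfnn) (hfc.intervalIntegrable 0 1)]
      exact hint0
    have haeIcc : f =ᵐ[MeasureTheory.volume.restrict (Set.Icc (0:ℝ) 1)] 0 := by
      rwa [← MeasureTheory.Measure.restrict_congr_set MeasureTheory.Ioc_ae_eq_Icc]
    have hEq : Set.EqOn f 0 (Set.Icc (0:ℝ) 1) :=
      MeasureTheory.Measure.eqOn_Icc_of_ae_eq MeasureTheory.volume (by norm_num) haeIcc
        hfc.continuousOn continuousOn_const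
    intro z hz
    have hfz : f z = 0 := hEq hz
    have h1 : 0 ≤ G * (K + R) * (i z - istar z) ^ 2 := by positivity
    have h2 : 0 ≤ (G * v z + deriv i z) ^ 2 := sq_nonneg _
    have h3 : 0 ≤ (G * vstar z + deriv i z) ^ 2 := sq_nonneg _
    simp only [hf] at hfz
    have e2 : G * (K + R) * (i z - istar z) ^ 2 = 0 := by linarith
    have e1 : (G * v z + deriv i z) ^ 2 = 0 := by linarith
    have e3 : (G * vstar z + deriv i z) ^ 2 = 0 := by linarith
    have hGKR : (0:ℝ) < G * (K + R) := by positivity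
    have hii : i z = istar z := by
      have := (mul_eq_zero.mp e2).resolve_left hGKR.ne'
      have := pow_eq_zero_iff (n := 2) (by norm_num) |>.mp this
      linarith
    have hvv : v z = vstar z := by
      have a1 : G * v z + deriv i z = 0 := by
        have := pow_eq_zero_iff (n := 2) (by norm_num) |>.mp e1; linarith
      have a3 : G * vstar z + deriv i z = 0 := by
        have := pow_eq_zero_iff (n := 2) (by norm_num) |>.mp e3; linarith
      have : G * v z = G * vstar z := by linarith
      exact mul_left_cancel₀ hG.ne' this
    exact ⟨hii, hvv⟩
  · intro hiv
    have hone : ∀ᵐ x ∂(MeasureTheory.volume : MeasureTheory.Measure ℝ), x ≠ 1 := by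
      have : (MeasureTheory.volume : MeasureTheory.Measure ℝ) {(1:ℝ)} = 0 :=
        MeasureTheory.measure_singleton 1
      exact MeasureTheory.measure_eq_zero_iff_ae_notMem.mp this
    have hzero : ∫ z in (0:ℝ)..1, f z = 0 := by
      have : ∫ z in (0:ℝ)..1, f z = ∫ z in (0:ℝ)..1, (0:ℝ) := by
        apply intervalIntegral.integral_congr_ae
        filter_upwards [hone] with x hx1 hxI
        rw [Set.uIoc_of_le (by norm_num : (0:ℝ) ≤ 1)] at hxI
        have hxIoo : x ∈ Set.Ioo (0:ℝ) 1 := ⟨hxI.1, lt_of_le_of_ne hxI.2 hx1⟩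
        have hxIcc : x ∈ Set.Icc (0:ℝ) 1 := ⟨hxIoo.1.le, hxIoo.2.le⟩
        have hnbhd : Set.Icc (0:ℝ) 1 ∈ nhds x :=
          Icc_mem_nhds hxIoo.1 hxIoo.2
        have hev : i =ᶠ[nhds x] istar :=
          Filter.eventuallyEq_of_mem hnbhd (fun y hy => (hiv y hy).1)
        have hderiveq : deriv i x = deriv istar x := hev.deriv_eq
        have hix : i x = istar x := (hiv x hxIcc).1
        have hvx : v x = vstar x := (hiv x hxIcc).2
        simp only [hf, hix, hvx, hderiveq, heq x hxIcc]
        ring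
      simpa using this
    rw [hzero, mul_zero]
end

section
/- Let L, C, R, G, K > 0, let i* : [0,1] → ℝ be C¹ and v* : [0,1] → ℝ be C¹ with G·v*(z) + (i*)′(z) = 0 on [0,1]. Let i, v : [0,1] × ℝ → ℝ be smooth (at least C²) and satisfy the closed-loop equations L·∂i/∂t = −∂/∂z( v − v* ) − (R + K)·(i − i*) and C·∂v/∂t = −∂i/∂z − G·v on [0,1] × ℝ. Assume (∂i/∂t)(0,t) = (∂i/∂t)(1,t) = 0 for all t, and for all t: ∫₀¹ (∂²v/∂z∂t)² dz ≤ (G²·L/C)·∫₀¹ (∂v/∂t)² dz. Then the closed-loop shaped potential P_d(t) = (1/(2G))·∫₀¹ [ (G·v + ∂i/∂z)² + G·(K + R)·(i − i*)² + (G·v* + ∂i/∂z)² ] dz is nonincreasing: dP_d/dt ≤ 0 for all t. Moreover P_d(t) ≥ 0, with P_d(t) = 0 exactly when i(·,t) = i* and v(·,t) = v*, so the closed-loop system has a stable equilibrium at (i*, v*). -/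
open Set MeasureTheory Function

namespace CL14

noncomputable def pz (f : ℝ → ℝ → ℝ) (z t : ℝ) : ℝ :=
  fderiv ℝ (uncurry f) (z, t) (1, 0)

noncomputable def pt (f : ℝ → ℝ → ℝ) (z t : ℝ) : ℝ :=
  fderiv ℝ (uncurry f) (z, t) (0, 1)

noncomputable def ptz (f : ℝ → ℝ → ℝ) (z t : ℝ) : ℝ :=
  fderiv ℝ (fderiv ℝ (uncurry f)) (z, t) (1, 0) (0, 1)

variable {f : ℝ → ℝ → ℝ} (hf : ContDiff ℝ 2 (uncurry f))

theorem hasDerivAt_line_fst {g : ℝ × ℝ → ℝ} (hg : DifferentiableAt ℝ g (z, t)) :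
    HasDerivAt (fun w => g (w, t)) (fderiv ℝ g (z, t) (1, 0)) z := by
  have h1 : HasDerivAt (fun w : ℝ => (w, t)) ((1 : ℝ), (0 : ℝ)) z := by
    simpa using HasDerivAt.prodMk (hasDerivAt_id z) (hasDerivAt_const z t)
  exact hg.hasFDerivAt.comp_hasDerivAt z h1

theorem hasDerivAt_line_snd {g : ℝ × ℝ → ℝ} (hg : DifferentiableAt ℝ g (z, t)) :
    HasDerivAt (fun τ => g (z, τ)) (fderiv ℝ g (z, t) (0, 1)) t := by
  have h1 : HasDerivAt (fun τ : ℝ => (z, τ)) ((0 : ℝ), (1 : ℝ)) t := by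
    simpa using HasDerivAt.prodMk (hasDerivAt_const t z) (hasDerivAt_id t)
  exact hg.hasFDerivAt.comp_hasDerivAt t h1

include hf

theorem hasDerivAt_pz (z t : ℝ) :
    HasDerivAt (fun w => f w t) (pz f z t) z :=
  hasDerivAt_line_fst ((hf.differentiable (by norm_num)) (z, t))

theorem hasDerivAt_pt (z t : ℝ) :
    HasDerivAt (fun τ => f z τ) (pt f z t) t :=
  hasDerivAt_line_snd ((hf.differentiable (by norm_num)) (z, t))

theorem deriv_pz (z t : ℝ) : deriv (fun w => f w t) z = pz f z t :=
  (hasDerivAt_pz hf z t).deriv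

theorem deriv_pt (z t : ℝ) : deriv (f z) t = pt f z t :=
  (hasDerivAt_pt hf z t).deriv

theorem contDiff_fderiv : ContDiff ℝ 1 (fderiv ℝ (uncurry f)) :=
  hf.fderiv_right (by norm_num)

theorem hasDerivAt_pt_fst (z t : ℝ) :
    HasDerivAt (fun w => pt f w t) (ptz f z t) z := by
  have hg : DifferentiableAt ℝ (fderiv ℝ (uncurry f)) (z, t) :=
    ((contDiff_fderiv hf).differentiable one_ne_zero) (z, t)
  have h1 : HasDerivAt (fun w : ℝ => (w, t)) ((1 : ℝ), (0 : ℝ)) z := by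
    simpa using HasDerivAt.prodMk (hasDerivAt_id z) (hasDerivAt_const z t)
  have h2 : HasDerivAt (fun w => fderiv ℝ (uncurry f) (w, t))
      (fderiv ℝ (fderiv ℝ (uncurry f)) (z, t) (1, 0)) z :=
    hg.hasFDerivAt.comp_hasDerivAt z h1
  have h3 := ((ContinuousLinearMap.apply ℝ ℝ ((0 : ℝ), (1 : ℝ))).hasFDerivAt).comp_hasDerivAt z h2
  simpa [ptz, pt, Function.comp_def] using h3

theorem isSymm (z t : ℝ) :
    fderiv ℝ (fderiv ℝ (uncurry f)) (z, t) (0, 1) (1, 0) = ptz f z t := by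
  have := (hf.contDiffAt (x := (z, t))).isSymmSndFDerivAt (by simp)
  exact this (0, 1) (1, 0)

theorem hasDerivAt_pz_snd (z t : ℝ) :
    HasDerivAt (fun τ => pz f z τ) (ptz f z t) t := by
  have hg : DifferentiableAt ℝ (fderiv ℝ (uncurry f)) (z, t) :=
    ((contDiff_fderiv hf).differentiable one_ne_zero) (z, t)
  have h1 : HasDerivAt (fun τ : ℝ => (z, τ)) ((0 : ℝ), (1 : ℝ)) t := by
    simpa using HasDerivAt.prodMk (hasDerivAt_const t z) (hasDerivAt_id t)
  have h2 : HasDerivAt (fun τ => fderiv ℝ (uncurry f) (z, τ))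
      (fderiv ℝ (fderiv ℝ (uncurry f)) (z, t) (0, 1)) t :=
    hg.hasFDerivAt.comp_hasDerivAt t h1
  have h3 := ((ContinuousLinearMap.apply ℝ ℝ ((1 : ℝ), (0 : ℝ))).hasFDerivAt).comp_hasDerivAt t h2
  rw [← isSymm hf z t]
  simpa [pz, Function.comp_def] using h3

theorem continuous_pz : Continuous (fun p : ℝ × ℝ => pz f p.1 p.2) := by
  have := (hf.continuous_fderiv (by norm_num)).clm_apply (continuous_const (y := ((1:ℝ),(0:ℝ))))
  simpa [pz] using this

theorem continuous_pt : Continuous (fun p : ℝ × ℝ => pt f p.1 p.2) := by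
  have := (hf.continuous_fderiv (by norm_num)).clm_apply (continuous_const (y := ((0:ℝ),(1:ℝ))))
  simpa [pt] using this

theorem continuous_ptz : Continuous (fun p : ℝ × ℝ => ptz f p.1 p.2) := by
  have h0 : Continuous (fderiv ℝ (fderiv ℝ (uncurry f))) :=
    (contDiff_fderiv hf).continuous_fderiv one_ne_zero
  have := (h0.clm_apply (continuous_const (y := ((1:ℝ),(0:ℝ))))).clm_apply
    (continuous_const (y := ((0:ℝ),(1:ℝ))))
  simpa [ptz] using this


omit hf in
theorem zero_of_integral_zero {f : ℝ → ℝ} (hf : Continuous f)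
    (h0 : ∀ x ∈ Icc (0:ℝ) 1, 0 ≤ f x) (hz : (∫ x in (0:ℝ)..1, f x) = 0) :
    ∀ x ∈ Icc (0:ℝ) 1, f x = 0 := by
  by_contra h
  push_neg at h
  obtain ⟨x₀, hx₀, hfx₀⟩ := h
  have hpos : 0 < f x₀ := lt_of_le_of_ne (h0 x₀ hx₀) (Ne.symm hfx₀)
  have hU : IsOpen (f ⁻¹' Ioi (f x₀ / 2)) := isOpen_Ioi.preimage hf
  have hx₀U : x₀ ∈ f ⁻¹' Ioi (f x₀ / 2) := by simp [Set.mem_preimage]; linarith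
  obtain ⟨ε, hε, hball⟩ := Metric.isOpen_iff.1 hU x₀ hx₀U
  set c : ℝ := max 0 (x₀ - ε / 2) with hc
  set d : ℝ := min 1 (x₀ + ε / 2) with hd
  have hcd : c < d := by
    apply max_lt <;> apply lt_min
    · linarith
    · linarith [hx₀.1]
    · linarith [hx₀.2]
    · linarith
  have hsub : ∀ x ∈ Icc c d, f x₀ / 2 ≤ f x := by
    intro x hx
    have : x ∈ Metric.ball x₀ ε := by
      rw [Real.ball_eq_Ioo]
      constructor
      · have := hx.1; have : c ≤ x := hx.1
        have h1 : x₀ - ε / 2 ≤ c := le_max_right _ _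
        linarith
      · have h1 : d ≤ x₀ + ε / 2 := min_le_right _ _
        have := hx.2; linarith
    have := hball this
    simp [Set.mem_preimage, Set.mem_Ioi] at this
    linarith
  have h0c : (0:ℝ) ≤ c := le_max_left _ _
  have hd1 : d ≤ 1 := min_le_left _ _
  have hint : ∀ a b : ℝ, IntervalIntegrable f volume a b := fun a b =>
    hf.intervalIntegrable a b
  have hsplit : (∫ x in (0:ℝ)..1, f x) =
      (∫ x in (0:ℝ)..c, f x) + (∫ x in c..d, f x) + (∫ x in d..1, f x) := by
    rw [intervalIntegral.integral_add_adjacent_intervals (hint 0 c) (hint c d),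
      intervalIntegral.integral_add_adjacent_intervals (hint 0 d) (hint d 1)]
  have h1 : 0 ≤ ∫ x in (0:ℝ)..c, f x :=
    intervalIntegral.integral_nonneg h0c fun u hu =>
      h0 u ⟨hu.1, hu.2.trans (hd1.trans' hcd.le)⟩
  have h2 : 0 ≤ ∫ x in d..1, f x :=
    intervalIntegral.integral_nonneg hd1 fun u hu =>
      h0 u ⟨(h0c.trans (hcd.le.trans hu.1)), hu.2⟩
  have h3 : (d - c) * (f x₀ / 2) ≤ ∫ x in c..d, f x := by
    have := intervalIntegral.integral_mono_on (f := fun _ => f x₀ / 2) (g := f)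
      hcd.le (intervalIntegrable_const) (hint c d) hsub
    simpa [mul_div_assoc] using this
  have hdc : 0 < d - c := by linarith
  have : 0 < ∫ x in c..d, f x := lt_of_lt_of_le (by positivity) h3
  linarith

end CL14

open CL14 in
/-- For the closed-loop transmission line
`L·∂i/∂t = −∂(v − v*)/∂z − (R+K)(i − i*)`, `C·∂v/∂t = −∂i/∂z − G·v` with target
profiles satisfying `G·v* + (i*)′ = 0`, zero boundary energy flow
`(∂i/∂t)(0,t) = (∂i/∂t)(1,t) = 0`, and the operator-norm condition
`∫₀¹ (∂²v/∂z∂t)² ≤ (G²L/C)∫₀¹ (∂v/∂t)²`, the closed-loop shaped potential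
`P_d(t)` is nonincreasing, nonnegative, and vanishes exactly at the desired
equilibrium profile `(i*, v*)`. -/
theorem closed_loop_stability (L C R G K : ℝ)
    (hL : 0 < L) (hC : 0 < C) (hR : 0 < R) (hG : 0 < G) (hK : 0 < K)
    (istar vstar : ℝ → ℝ) (histar : ContDiff ℝ 1 istar) (hvstar : ContDiff ℝ 1 vstar)
    (hstar : ∀ z ∈ Set.Icc (0:ℝ) 1, G * vstar z + deriv istar z = 0)
    (i v : ℝ → ℝ → ℝ)
    (hi : ContDiff ℝ 2 (Function.uncurry i)) (hv : ContDiff ℝ 2 (Function.uncurry v))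
    (heq1 : ∀ t : ℝ, ∀ z ∈ Set.Icc (0:ℝ) 1,
      L * deriv (i z) t = -(deriv (fun w => v w t - vstar w) z)
        - (R + K) * (i z t - istar z))
    (heq2 : ∀ t : ℝ, ∀ z ∈ Set.Icc (0:ℝ) 1,
      C * deriv (v z) t = -(deriv (fun w => i w t) z) - G * v z t)
    (hbd : ∀ t : ℝ, deriv (i 0) t = 0 ∧ deriv (i 1) t = 0)
    (hop : ∀ t : ℝ,
      (∫ z in (0:ℝ)..1, (deriv (fun w => deriv (v w) t) z) ^ 2)
        ≤ G ^ 2 * L / C * ∫ z in (0:ℝ)..1, (deriv (v z) t) ^ 2) :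
    (∀ t : ℝ,
      deriv (fun τ => 1 / (2 * G) * ∫ z in (0:ℝ)..1,
          ((G * v z τ + deriv (fun w => i w τ) z) ^ 2
            + G * (K + R) * (i z τ - istar z) ^ 2
            + (G * vstar z + deriv (fun w => i w τ) z) ^ 2)) t ≤ 0)
    ∧ (∀ t : ℝ,
        0 ≤ 1 / (2 * G) * ∫ z in (0:ℝ)..1,
          ((G * v z t + deriv (fun w => i w t) z) ^ 2
            + G * (K + R) * (i z t - istar z) ^ 2
            + (G * vstar z + deriv (fun w => i w t) z) ^ 2))
    ∧ (∀ t : ℝ,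
        (1 / (2 * G) * ∫ z in (0:ℝ)..1,
          ((G * v z t + deriv (fun w => i w t) z) ^ 2
            + G * (K + R) * (i z t - istar z) ^ 2
            + (G * vstar z + deriv (fun w => i w t) z) ^ 2)) = 0
          ↔ ∀ z ∈ Set.Icc (0:ℝ) 1, i z t = istar z ∧ v z t = vstar z) := by
  have Ei_t : ∀ z t, deriv (i z) t = pt i z t := fun z t => deriv_pt hi z t
  have Ev_t : ∀ z t, deriv (v z) t = pt v z t := fun z t => deriv_pt hv z t
  have Ei_z : ∀ t z, deriv (fun w => i w t) z = pz i z t := fun t z => deriv_pz hi z t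
  set F : ℝ → ℝ → ℝ := fun τ z =>
    (G * v z τ + pz i z τ) ^ 2 + G * (K + R) * (i z τ - istar z) ^ 2
      + (G * vstar z + pz i z τ) ^ 2 with hFdef
  have hFeq : ∀ τ z,
      ((G * v z τ + deriv (fun w => i w τ) z) ^ 2
        + G * (K + R) * (i z τ - istar z) ^ 2
        + (G * vstar z + deriv (fun w => i w τ) z) ^ 2) = F τ z := by
    intro τ z; rw [hFdef]; rw [Ei_z]
  have hIeq : ∀ τ,
      (∫ z in (0:ℝ)..1,
          ((G * v z τ + deriv (fun w => i w τ) z) ^ 2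
            + G * (K + R) * (i z τ - istar z) ^ 2
            + (G * vstar z + deriv (fun w => i w τ) z) ^ 2))
        = ∫ z in (0:ℝ)..1, F τ z := by
    intro τ; congr 1; funext z; exact hFeq τ z
  -- continuity facts
  have cIv : Continuous (fun p : ℝ × ℝ => i p.1 p.2) := hi.continuous
  have cVv : Continuous (fun p : ℝ × ℝ => v p.1 p.2) := hv.continuous
  have ciz : Continuous (fun p : ℝ × ℝ => pz i p.1 p.2) := continuous_pz hi
  have cit : Continuous (fun p : ℝ × ℝ => pt i p.1 p.2) := continuous_pt hi
  have cvt : Continuous (fun p : ℝ × ℝ => pt v p.1 p.2) := continuous_pt hv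
  have cvz : Continuous (fun p : ℝ × ℝ => pz v p.1 p.2) := continuous_pz hv
  have cizt : Continuous (fun p : ℝ × ℝ => ptz i p.1 p.2) := continuous_ptz hi
  have cvzt : Continuous (fun p : ℝ × ℝ => ptz v p.1 p.2) := continuous_ptz hv
  have cistar : Continuous istar := histar.continuous
  have cvstar : Continuous vstar := hvstar.continuous
  have cvsz : Continuous (deriv vstar) := hvstar.continuous_deriv le_rfl
  have hline : ∀ t : ℝ, Continuous (fun z : ℝ => (z, t)) := fun t =>
    continuous_id.prodMk continuous_const
  have cistar1 : Continuous (fun p : ℝ × ℝ => istar p.1) := cistar.comp continuous_fst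
  have cvstar1 : Continuous (fun p : ℝ × ℝ => vstar p.1) := cvstar.comp continuous_fst
  have hFcontj : Continuous (fun p : ℝ × ℝ => F p.2 p.1) := by
    simp only [hFdef]
    exact ((((continuous_const.mul cVv).add ciz).pow 2).add
      (continuous_const.mul ((cIv.sub cistar1).pow 2))).add
      (((continuous_const.mul cvstar1).add ciz).pow 2)
  have hFcont : ∀ τ, Continuous (fun z => F τ z) := fun τ =>
    hFcontj.comp (continuous_id.prodMk continuous_const)
  -- Part 2 : nonnegativity
  have part2 : ∀ t : ℝ,
      0 ≤ 1 / (2 * G) * ∫ z in (0:ℝ)..1,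
          ((G * v z t + deriv (fun w => i w t) z) ^ 2
            + G * (K + R) * (i z t - istar z) ^ 2
            + (G * vstar z + deriv (fun w => i w t) z) ^ 2) := by
    intro t
    rw [hIeq t]
    have h1 : 0 ≤ ∫ z in (0:ℝ)..1, F t z :=
      intervalIntegral.integral_nonneg zero_le_one fun u _ => by
        simp only [hFdef]; positivity
    positivity
  refine ⟨?_, part2, ?_⟩
  · -- Part 1 : deriv nonpositive
    intro t₀
    set F' : ℝ → ℝ → ℝ := fun τ z =>
      2 * (G * v z τ + pz i z τ) * (G * pt v z τ + ptz i z τ)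
        + G * (K + R) * (2 * (i z τ - istar z) * pt i z τ)
        + 2 * (G * vstar z + pz i z τ) * (ptz i z τ) with hF'def
    have hF'cont : Continuous (fun p : ℝ × ℝ => F' p.2 p.1) := by
      simp only [hF'def]
      exact (((continuous_const.mul ((continuous_const.mul cVv).add ciz)).mul
        ((continuous_const.mul cvt).add cizt)).add
        (continuous_const.mul ((continuous_const.mul (cIv.sub cistar1)).mul cit))).add
        ((continuous_const.mul ((continuous_const.mul cvstar1).add ciz)).mul cizt)
    have hFderiv : ∀ z τ, HasDerivAt (fun x => F x z) (F' τ z) τ := by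
      intro z τ
      have h1 : HasDerivAt (fun τ => G * v z τ + pz i z τ)
          (G * pt v z τ + ptz i z τ) τ :=
        ((hasDerivAt_pt hv z τ).const_mul G).add (hasDerivAt_pz_snd hi z τ)
      have h2 : HasDerivAt (fun τ => i z τ - istar z) (pt i z τ) τ :=
        (hasDerivAt_pt hi z τ).sub_const _
      have h3 : HasDerivAt (fun τ => G * vstar z + pz i z τ) (ptz i z τ) τ :=
        (hasDerivAt_pz_snd hi z τ).const_add _
      have h4 := ((h1.pow 2).add ((h2.pow 2).const_mul (G * (K + R)))).add (h3.pow 2)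
      have : F' τ z = (2 * (G * v z τ + pz i z τ) ^ (2-1) * (G * pt v z τ + ptz i z τ)
          + G * (K + R) * (2 * (i z τ - istar z) ^ (2-1) * pt i z τ))
          + 2 * (G * vstar z + pz i z τ) ^ (2-1) * (ptz i z τ) := by
        rw [hF'def]; ring
      rw [this]
      exact h4
    obtain ⟨M, hM⟩ :=
      (isCompact_Icc.prod isCompact_Icc :
        IsCompact ((Icc (0:ℝ) 1) ×ˢ (Icc (t₀-1) (t₀+1)))).exists_bound_of_continuousOn
      hF'cont.continuousOn
    have key := intervalIntegral.hasDerivAt_integral_of_dominated_loc_of_deriv_le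
      (F := F) (F' := F') (x₀ := t₀) (a := (0:ℝ)) (b := 1) (bound := fun _ => M)
      (μ := volume) (Metric.ball_mem_nhds t₀ zero_lt_one)
      (Filter.Eventually.of_forall fun x => (hFcont x).aestronglyMeasurable)
      ((hFcont t₀).intervalIntegrable 0 1)
      ((hF'cont.comp (continuous_id.prodMk (continuous_const (y := t₀)))).aestronglyMeasurable)
      (MeasureTheory.ae_of_all _ fun z hz x hx => by
        have hzI : z ∈ Icc (0:ℝ) 1 := by
          rw [Set.uIoc_of_le zero_le_one] at hz; exact Set.Ioc_subset_Icc_self hz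
        have hxI : x ∈ Icc (t₀-1) (t₀+1) := by
          rw [Real.ball_eq_Ioo] at hx; exact Set.Ioo_subset_Icc_self hx
        exact hM (z, x) ⟨hzI, hxI⟩)
      intervalIntegrable_const
      (MeasureTheory.ae_of_all _ fun z hz x hx => hFderiv z x)
    have hD : HasDerivAt (fun τ => 1 / (2 * G) * ∫ z in (0:ℝ)..1, F τ z)
        (1 / (2 * G) * ∫ z in (0:ℝ)..1, F' t₀ z) t₀ := key.2.const_mul _
    have hfun : (fun τ => 1 / (2 * G) * ∫ z in (0:ℝ)..1,
          ((G * v z τ + deriv (fun w => i w τ) z) ^ 2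
            + G * (K + R) * (i z τ - istar z) ^ 2
            + (G * vstar z + deriv (fun w => i w τ) z) ^ 2))
        = fun τ => 1 / (2 * G) * ∫ z in (0:ℝ)..1, F τ z := by
      funext τ; rw [hIeq τ]
    rw [hfun, hD.deriv]
    -- now show the integral of F' t₀ is ≤ 0
    set A : ℝ → ℝ := fun z => pt v z t₀ with hA
    set B : ℝ → ℝ := fun z => pt i z t₀ with hB
    set Mi : ℝ → ℝ := fun z => ptz i z t₀ with hMi
    set W : ℝ → ℝ := fun z => ptz v z t₀ with hW
    have cA : Continuous A := cvt.comp (hline t₀)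
    have cB : Continuous B := cit.comp (hline t₀)
    have cM : Continuous Mi := cizt.comp (hline t₀)
    have cW : Continuous W := cvzt.comp (hline t₀)
    have cVt : Continuous (fun z => v z t₀) := cVv.comp (hline t₀)
    have cIt : Continuous (fun z => i z t₀) := cIv.comp (hline t₀)
    have cpzv : Continuous (fun z => pz v z t₀) := cvz.comp (hline t₀)
    have hB0 : B 0 = 0 := by simp only [hB]; rw [← Ei_t 0 t₀]; exact (hbd t₀).1
    have hB1 : B 1 = 0 := by simp only [hB]; rw [← Ei_t 1 t₀]; exact (hbd t₀).2
    have ibp1 : (∫ z in (0:ℝ)..1,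
        (Mi z * (v z t₀ - vstar z) + B z * (pz v z t₀ - deriv vstar z))) = 0 := by
      have h := intervalIntegral.integral_deriv_mul_eq_sub_of_hasDerivAt (a := (0:ℝ)) (b := 1)
        (u := B) (v := fun w => v w t₀ - vstar w) (u' := Mi)
        (v' := fun z => pz v z t₀ - deriv vstar z)
        cB.continuousOn (cVt.sub cvstar).continuousOn
        (fun x _ => hasDerivAt_pt_fst hi x t₀)
        (fun x _ => (hasDerivAt_pz hv x t₀).sub
          ((hvstar.differentiable one_ne_zero x).hasDerivAt))
        (cM.intervalIntegrable 0 1)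
        ((cpzv.sub cvsz).intervalIntegrable 0 1)
      rw [h, hB0, hB1]; ring
    have ibp2 : (∫ z in (0:ℝ)..1, (W z * B z + A z * Mi z)) = 0 := by
      have h := intervalIntegral.integral_deriv_mul_eq_sub_of_hasDerivAt (a := (0:ℝ)) (b := 1)
        (u := A) (v := B) (u' := W) (v' := Mi)
        cA.continuousOn cB.continuousOn
        (fun x _ => hasDerivAt_pt_fst hv x t₀)
        (fun x _ => hasDerivAt_pt_fst hi x t₀)
        (cW.intervalIntegrable 0 1)
        (cM.intervalIntegrable 0 1)
      rw [h, hB0, hB1]; ring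
    have hpt : ∀ z ∈ Icc (0:ℝ) 1, F' t₀ z =
        ((-(2*C*G)) * (A z)^2 + (-(2*G*L)) * (B z)^2 + (4*C) * (W z * B z))
          + (-(2*G)) * (Mi z * (v z t₀ - vstar z) + B z * (pz v z t₀ - deriv vstar z))
          + (-(4*C)) * (W z * B z + A z * Mi z) := by
      intro z hz
      have h2 := heq2 t₀ z hz
      rw [Ev_t, Ei_z] at h2
      have h1 := heq1 t₀ z hz
      rw [Ei_t] at h1
      have hvzeq : deriv (fun w => v w t₀ - vstar w) z = pz v z t₀ - deriv vstar z :=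
        ((hasDerivAt_pz hv z t₀).sub ((hvstar.differentiable one_ne_zero z).hasDerivAt)).deriv
      rw [hvzeq] at h1
      simp only [hF'def, hA, hB, hMi, hW]
      linear_combination (2 * (G * pt v z t₀ + ptz i z t₀) + 2 * ptz i z t₀) * h2
        + (2 * G * pt i z t₀) * h1
    have hsplit : (∫ z in (0:ℝ)..1, F' t₀ z)
        = (∫ z in (0:ℝ)..1,
            ((-(2*C*G)) * (A z)^2 + (-(2*G*L)) * (B z)^2 + (4*C) * (W z * B z)))
          + (-(2*G)) * (∫ z in (0:ℝ)..1,
            (Mi z * (v z t₀ - vstar z) + B z * (pz v z t₀ - deriv vstar z)))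
          + (-(4*C)) * (∫ z in (0:ℝ)..1, (W z * B z + A z * Mi z)) := by
      have hcont1 : Continuous fun z =>
          ((-(2*C*G)) * (A z)^2 + (-(2*G*L)) * (B z)^2 + (4*C) * (W z * B z)) :=
        ((continuous_const.mul (cA.pow 2)).add (continuous_const.mul (cB.pow 2))).add
          (continuous_const.mul (cW.mul cB))
      have hcont2 : Continuous fun z =>
          (Mi z * (v z t₀ - vstar z) + B z * (pz v z t₀ - deriv vstar z)) := by
        exact (cM.mul (cVt.sub cvstar)).add (cB.mul (cpzv.sub cvsz))
      have hcont3 : Continuous fun z => (W z * B z + A z * Mi z) :=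
        (cW.mul cB).add (cA.mul cM)
      rw [intervalIntegral.integral_congr (g := fun z =>
          ((-(2*C*G)) * (A z)^2 + (-(2*G*L)) * (B z)^2 + (4*C) * (W z * B z))
          + (-(2*G)) * (Mi z * (v z t₀ - vstar z) + B z * (pz v z t₀ - deriv vstar z))
          + (-(4*C)) * (W z * B z + A z * Mi z))
        (fun z hz => hpt z (by rwa [Set.uIcc_of_le zero_le_one] at hz))]
      rw [intervalIntegral.integral_add (f := fun z => ((-(2*C*G)) * (A z)^2 + (-(2*G*L)) * (B z)^2 + (4*C) * (W z * B z)) + (-(2*G)) * (Mi z * (v z t₀ - vstar z) + B z * (pz v z t₀ - deriv vstar z))) (g := fun z => (-(4*C)) * (W z * B z + A z * Mi z)) (((hcont1.add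
          (continuous_const.mul hcont2)).intervalIntegrable 0 1))
          ((continuous_const.mul hcont3).intervalIntegrable 0 1),
        intervalIntegral.integral_add (f := fun z => ((-(2*C*G)) * (A z)^2 + (-(2*G*L)) * (B z)^2 + (4*C) * (W z * B z))) (g := fun z => (-(2*G)) * (Mi z * (v z t₀ - vstar z) + B z * (pz v z t₀ - deriv vstar z))) (hcont1.intervalIntegrable 0 1)
          ((continuous_const.mul hcont2).intervalIntegrable 0 1),
        intervalIntegral.integral_const_mul, intervalIntegral.integral_const_mul]
    rw [hsplit, ibp1, ibp2]
    have hmain : (∫ z in (0:ℝ)..1,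
        ((-(2*C*G)) * (A z)^2 + (-(2*G*L)) * (B z)^2 + (4*C) * (W z * B z))) ≤ 0 := by
      have hptle : ∀ z ∈ Icc (0:ℝ) 1,
          ((-(2*C*G)) * (A z)^2 + (-(2*G*L)) * (B z)^2 + (4*C) * (W z * B z))
            ≤ (-(2*C*G)) * (A z)^2 + (2*C^2/(G*L)) * (W z)^2 := by
        intro z _
        have h3 : 0 ≤ (2/(G*L)) * (G*L*B z - C*W z)^2 := by positivity
        have h4 : (2/(G*L)) * (G*L*B z - C*W z)^2
            = 2*G*L*(B z)^2 - 4*C*(W z * B z) + 2*C^2/(G*L) * (W z)^2 := by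
          field_simp
          ring
        linarith [h3, h4]
      have hcont1 : Continuous fun z =>
          ((-(2*C*G)) * (A z)^2 + (-(2*G*L)) * (B z)^2 + (4*C) * (W z * B z)) :=
        ((continuous_const.mul (cA.pow 2)).add (continuous_const.mul (cB.pow 2))).add
          (continuous_const.mul (cW.mul cB))
      have hcont4 : Continuous fun z =>
          ((-(2*C*G)) * (A z)^2 + (2*C^2/(G*L)) * (W z)^2) :=
        (continuous_const.mul (cA.pow 2)).add (continuous_const.mul (cW.pow 2))
      have hmono := intervalIntegral.integral_mono_on (μ := volume) zero_le_one
        (hcont1.intervalIntegrable 0 1) (hcont4.intervalIntegrable 0 1) hptle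
      have hsplit2 : (∫ z in (0:ℝ)..1,
          ((-(2*C*G)) * (A z)^2 + (2*C^2/(G*L)) * (W z)^2))
          = (-(2*C*G)) * (∫ z in (0:ℝ)..1, (A z)^2)
            + (2*C^2/(G*L)) * (∫ z in (0:ℝ)..1, (W z)^2) := by
        rw [intervalIntegral.integral_add (f := fun z => (-(2*C*G)) * (A z)^2) (g := fun z => (2*C^2/(G*L)) * (W z)^2)
            ((continuous_const.mul ((cA.pow 2))).intervalIntegrable 0 1)
            ((continuous_const.mul ((cW.pow 2))).intervalIntegrable 0 1),
          intervalIntegral.integral_const_mul, intervalIntegral.integral_const_mul]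
      have hopW : (∫ z in (0:ℝ)..1, (W z)^2)
          ≤ G^2 * L / C * (∫ z in (0:ℝ)..1, (A z)^2) := by
        have hfun2 : (fun w => deriv (v w) t₀) = fun w => pt v w t₀ :=
          funext fun w => Ev_t w t₀
        have e5 : (fun z : ℝ => (deriv (fun w => deriv (v w) t₀) z)^2)
            = fun z => (W z)^2 := by
          funext z
          rw [hfun2, (hasDerivAt_pt_fst hv z t₀).deriv]
        have e6 : (fun z : ℝ => (deriv (v z) t₀)^2) = fun z => (A z)^2 := by
          funext z
          rw [Ev_t]
        have hopt := hop t₀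
        rw [show (∫ z in (0:ℝ)..1, (deriv (fun w => deriv (v w) t₀) z)^2)
              = ∫ z in (0:ℝ)..1, (W z)^2 by rw [e5],
            show (∫ z in (0:ℝ)..1, (deriv (v z) t₀)^2)
              = ∫ z in (0:ℝ)..1, (A z)^2 by rw [e6]] at hopt
        exact hopt
      have hposc : (0:ℝ) ≤ 2*C^2/(G*L) := by positivity
      have hfin : (2*C^2/(G*L)) * (∫ z in (0:ℝ)..1, (W z)^2)
          ≤ (2*C*G) * (∫ z in (0:ℝ)..1, (A z)^2) := by
        have := mul_le_mul_of_nonneg_left hopW hposc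
        calc (2*C^2/(G*L)) * (∫ z in (0:ℝ)..1, (W z)^2)
            ≤ (2*C^2/(G*L)) * (G^2 * L / C * (∫ z in (0:ℝ)..1, (A z)^2)) := this
          _ = (2*C*G) * (∫ z in (0:ℝ)..1, (A z)^2) := by
              field_simp
      calc (∫ z in (0:ℝ)..1,
          ((-(2*C*G)) * (A z)^2 + (-(2*G*L)) * (B z)^2 + (4*C) * (W z * B z)))
          ≤ (-(2*C*G)) * (∫ z in (0:ℝ)..1, (A z)^2)
            + (2*C^2/(G*L)) * (∫ z in (0:ℝ)..1, (W z)^2) := by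
            rw [← hsplit2]; exact hmono
        _ ≤ (-(2*C*G)) * (∫ z in (0:ℝ)..1, (A z)^2)
            + (2*C*G) * (∫ z in (0:ℝ)..1, (A z)^2) := by linarith [hfin]
        _ = 0 := by ring
    have : (0:ℝ) < 1 / (2*G) := by positivity
    nlinarith [hmain, this]
  · -- Part 3 : characterization of the zero level set
    intro t
    rw [hIeq t]
    constructor
    · intro h0
      have hGne : (1 / (2 * G)) ≠ 0 := by positivity
      have hint0 : (∫ z in (0:ℝ)..1, F t z) = 0 := by
        rcases mul_eq_zero.1 h0 with h | h
        · exact absurd h hGne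
        · exact h
      have hzero := zero_of_integral_zero (hFcont t)
        (fun x _ => by simp only [hFdef]; positivity) hint0
      intro z hz
      have hz0 := hzero z hz
      simp only [hFdef] at hz0
      have e1 : (G * v z t + pz i z t) ^ 2 = 0 ∧
          G * (K+R) * (i z t - istar z) ^ 2 = 0 ∧
          (G * vstar z + pz i z t) ^ 2 = 0 := by
        have q1 : (0:ℝ) ≤ (G * v z t + pz i z t) ^ 2 := sq_nonneg _
        have q2 : (0:ℝ) ≤ G * (K+R) * (i z t - istar z) ^ 2 := by positivity
        have q3 : (0:ℝ) ≤ (G * vstar z + pz i z t) ^ 2 := sq_nonneg _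
        refine ⟨by linarith, by linarith, by linarith⟩
      obtain ⟨e1a, e1b, e1c⟩ := e1
      have hGKR : G * (K + R) ≠ 0 := by positivity
      have hib : (i z t - istar z) ^ 2 = 0 := by
        rcases mul_eq_zero.1 e1b with h | h
        · exact absurd h hGKR
        · exact h
      have hieq : i z t = istar z := by
        have := pow_eq_zero_iff (n := 2) (by norm_num) |>.1 hib
        linarith
      refine ⟨hieq, ?_⟩
      have ha := pow_eq_zero_iff (n := 2) (by norm_num) |>.1 e1a
      have hc := pow_eq_zero_iff (n := 2) (by norm_num) |>.1 e1c
      have : G * v z t = G * vstar z := by linarith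
      exact mul_left_cancel₀ (ne_of_gt hG) this
    · intro hEq
      have hae : ∀ᵐ z ∂(volume : Measure ℝ), z ∈ Set.uIoc (0:ℝ) 1 → F t z = 0 := by
        have h1 : ∀ᵐ z ∂(volume : Measure ℝ), z ≠ (1:ℝ) := by
          rw [MeasureTheory.ae_iff]
          have : {z : ℝ | ¬ z ≠ (1:ℝ)} = {(1:ℝ)} := by ext x; simp
          rw [this]
          exact Real.volume_singleton
        filter_upwards [h1] with z hz1 hzI
        rw [Set.uIoc_of_le zero_le_one] at hzI
        have hzo : z ∈ Ioo (0:ℝ) 1 := ⟨hzI.1, lt_of_le_of_ne hzI.2 hz1⟩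
        have hzc : z ∈ Icc (0:ℝ) 1 := Set.Ioo_subset_Icc_self hzo
        obtain ⟨hiz, hvz⟩ := hEq z hzc
        have hnb : Set.Icc (0:ℝ) 1 ∈ nhds z := Icc_mem_nhds hzo.1 hzo.2
        have hev : (fun w => i w t) =ᶠ[nhds z] istar := by
          filter_upwards [hnb] with w hw
          exact (hEq w hw).1
        have hder : pz i z t = deriv istar z := by
          rw [← Ei_z t z]
          exact Filter.EventuallyEq.deriv_eq hev
        simp only [hFdef]
        rw [hder, hiz, hvz]
        have hs := hstar z hzc
        rw [hs]
        simp
      have : (∫ z in (0:ℝ)..1, F t z) = ∫ z in (0:ℝ)..1, (0:ℝ) :=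
        intervalIntegral.integral_congr_ae hae
      rw [this]
      simp
end

section
/- Let i, v : [0,1] × ℝ → ℝ be three times continuously differentiable and satisfy the telegrapher's equations L·∂i/∂t = −∂v/∂z − R·i and C·∂v/∂t = −∂i/∂z − G·v on [0,1] × ℝ, with constants L, C, R, G > 0. Define P₂(t) = (1/2)·∫₀¹ ( L·(∂i/∂t)² + C·(∂v/∂t)² ) dz. Then for all t: dP₂/dt = −∫₀¹ ( R·(∂i/∂t)² + G·(∂v/∂t)² ) dz − [ (∂v/∂t)·(∂i/∂t) ] evaluated from z = 0 to z = 1. -/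
lemma pd_snd {f : ℝ × ℝ → ℝ} (hf : Differentiable ℝ f) (z t : ℝ) :
    HasDerivAt (fun τ => f (z, τ)) (fderiv ℝ f (z, t) (0, 1)) t :=
  (hf (z, t)).hasFDerivAt.comp_hasDerivAt t
    ((hasDerivAt_const t z).prodMk (hasDerivAt_id t))

lemma pd_fst {f : ℝ × ℝ → ℝ} (hf : Differentiable ℝ f) (z t : ℝ) :
    HasDerivAt (fun w => f (w, t)) (fderiv ℝ f (z, t) (1, 0)) z :=
  (hf (z, t)).hasFDerivAt.comp_hasDerivAt z
    ((hasDerivAt_id z).prodMk (hasDerivAt_const z t))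

lemma contDiff_pd {f : ℝ × ℝ → ℝ} (hf : ContDiff ℝ 3 f) (u : ℝ × ℝ) :
    ContDiff ℝ 2 (fun p => fderiv ℝ f p u) :=
  (hf.fderiv_right (by norm_num)).clm_apply contDiff_const

lemma schwarz_mixed {f : ℝ × ℝ → ℝ} (hf : ContDiff ℝ 3 f) (z t : ℝ) :
    HasDerivAt (fun τ => fderiv ℝ f (z, τ) (1, 0))
      (fderiv ℝ (fun p => fderiv ℝ f p (0, 1)) (z, t) (1, 0)) t := by
  have hdf : ContDiff ℝ 2 (fderiv ℝ f) := hf.fderiv_right (by norm_num)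
  have hdiff : Differentiable ℝ (fun p => fderiv ℝ f p (1, 0)) :=
    (contDiff_pd hf _).differentiable (by norm_num)
  have h1 := pd_snd hdiff z t
  have e1 : fderiv ℝ (fun p => fderiv ℝ f p (1, 0)) (z, t) (0, 1)
      = (fderiv ℝ (fderiv ℝ f) (z, t) (0, 1)) (1, 0) := by
    rw [fderiv_clm_apply (hdf.differentiable (by norm_num) _) (differentiableAt_const _)]
    simp
  have e2 : fderiv ℝ (fun p => fderiv ℝ f p (0, 1)) (z, t) (1, 0)
      = (fderiv ℝ (fderiv ℝ f) (z, t) (1, 0)) (0, 1) := by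
    rw [fderiv_clm_apply (hdf.differentiable (by norm_num) _) (differentiableAt_const _)]
    simp
  have sym := second_derivative_symmetric
    (f := f) (f' := fderiv ℝ f) (f'' := fderiv ℝ (fderiv ℝ f) (z, t))
    (fun y => (hf.differentiable (by norm_num) y).hasFDerivAt)
    ((hdf.differentiable (by norm_num) (z, t)).hasFDerivAt)
    (0, 1) (1, 0)
  rw [e1, sym, ← e2] at h1
  exact h1


/-- For the telegrapher's equations, the functional
`P₂(t) = (1/2)∫₀¹ (L(∂i/∂t)² + C(∂v/∂t)²) dz` satisfies
`dP₂/dt = −∫₀¹ (R(∂i/∂t)² + G(∂v/∂t)²) dz − [(∂v/∂t)(∂i/∂t)]₀¹`. -/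
theorem P2_rate (L C R G : ℝ) (i v : ℝ → ℝ → ℝ)
    (hL : 0 < L) (hC : 0 < C) (hR : 0 < R) (hG : 0 < G)
    (hi : ContDiff ℝ 3 (Function.uncurry i)) (hv : ContDiff ℝ 3 (Function.uncurry v))
    (heq1 : ∀ t : ℝ, ∀ z ∈ Set.Icc (0:ℝ) 1,
      L * deriv (i z) t = -(deriv (fun w => v w t) z) - R * i z t)
    (heq2 : ∀ t : ℝ, ∀ z ∈ Set.Icc (0:ℝ) 1,
      C * deriv (v z) t = -(deriv (fun w => i w t) z) - G * v z t) :
    ∀ t : ℝ,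
      deriv (fun τ => 1 / 2 * ∫ z in (0:ℝ)..1,
          (L * (deriv (i z) τ) ^ 2 + C * (deriv (v z) τ) ^ 2)) t
        = -(∫ z in (0:ℝ)..1,
              (R * (deriv (i z) t) ^ 2 + G * (deriv (v z) t) ^ 2))
          - (deriv (v 1) t * deriv (i 1) t - deriv (v 0) t * deriv (i 0) t) := by
  intro t
  set I : ℝ × ℝ → ℝ := Function.uncurry i with hIdef
  set V : ℝ × ℝ → ℝ := Function.uncurry v with hVdef
  have hId : Differentiable ℝ I := hi.differentiable (by norm_num)
  have hVd : Differentiable ℝ V := hv.differentiable (by norm_num)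
  set A : ℝ × ℝ → ℝ := fun p => fderiv ℝ I p (0, 1) with hAdef
  set B : ℝ × ℝ → ℝ := fun p => fderiv ℝ V p (0, 1) with hBdef
  have hA2 : ContDiff ℝ 2 A := contDiff_pd hi _
  have hB2 : ContDiff ℝ 2 B := contDiff_pd hv _
  have hAd : Differentiable ℝ A := hA2.differentiable (by norm_num)
  have hBd : Differentiable ℝ B := hB2.differentiable (by norm_num)
  have hAc : Continuous A := hA2.continuous
  have hBc : Continuous B := hB2.continuous
  have hAτc : Continuous (fun p => fderiv ℝ A p ((0:ℝ), (1:ℝ))) :=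
    ((hA2.fderiv_right (m := 1) (by norm_num)).clm_apply contDiff_const).continuous
  have hBτc : Continuous (fun p => fderiv ℝ B p ((0:ℝ), (1:ℝ))) :=
    ((hB2.fderiv_right (m := 1) (by norm_num)).clm_apply contDiff_const).continuous
  -- identifying time derivatives
  have haA : ∀ z τ : ℝ, deriv (i z) τ = A (z, τ) := fun z τ => (pd_snd hId z τ).deriv
  have hbB : ∀ z τ : ℝ, deriv (v z) τ = B (z, τ) := fun z τ => (pd_snd hVd z τ).deriv
  -- differentiated telegrapher equations
  have E1 : ∀ z ∈ Set.Icc (0:ℝ) 1, ∀ s : ℝ,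
      L * fderiv ℝ A (z, s) (0, 1) = -(fderiv ℝ B (z, s) (1, 0)) - R * A (z, s) := by
    intro z hz s
    have h1 : (fun τ => L * A (z, τ))
        = fun τ => -(fderiv ℝ V (z, τ) (1, 0)) - R * I (z, τ) := by
      funext τ
      have h := heq1 τ z hz
      have hd : deriv (fun w => v w τ) z = fderiv ℝ V (z, τ) (1, 0) :=
        (pd_fst hVd z τ).deriv
      rw [haA, hd] at h
      exact h
    have hdL : HasDerivAt (fun τ => L * A (z, τ)) (L * fderiv ℝ A (z, s) (0, 1)) s :=
      (pd_snd hAd z s).const_mul L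
    have hdR : HasDerivAt (fun τ => -(fderiv ℝ V (z, τ) (1, 0)) - R * I (z, τ))
        (-(fderiv ℝ B (z, s) (1, 0)) - R * A (z, s)) s :=
      (schwarz_mixed hv z s).neg.sub ((pd_snd hId z s).const_mul R)
    rw [h1] at hdL
    exact hdL.unique hdR
  have E2 : ∀ z ∈ Set.Icc (0:ℝ) 1, ∀ s : ℝ,
      C * fderiv ℝ B (z, s) (0, 1) = -(fderiv ℝ A (z, s) (1, 0)) - G * B (z, s) := by
    intro z hz s
    have h1 : (fun τ => C * B (z, τ))
        = fun τ => -(fderiv ℝ I (z, τ) (1, 0)) - G * V (z, τ) := by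
      funext τ
      have h := heq2 τ z hz
      have hd : deriv (fun w => i w τ) z = fderiv ℝ I (z, τ) (1, 0) :=
        (pd_fst hId z τ).deriv
      rw [hbB, hd] at h
      exact h
    have hdL : HasDerivAt (fun τ => C * B (z, τ)) (C * fderiv ℝ B (z, s) (0, 1)) s :=
      (pd_snd hBd z s).const_mul C
    have hdR : HasDerivAt (fun τ => -(fderiv ℝ I (z, τ) (1, 0)) - G * V (z, τ))
        (-(fderiv ℝ A (z, s) (1, 0)) - G * B (z, s)) s :=
      (schwarz_mixed hi z s).neg.sub ((pd_snd hVd z s).const_mul G)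
    rw [h1] at hdL
    exact hdL.unique hdR
  -- differentiation under the integral sign
  set f : ℝ → ℝ → ℝ := fun x z => L * A (z, x) ^ 2 + C * B (z, x) ^ 2 with hfdef
  set f' : ℝ → ℝ → ℝ := fun x z =>
      L * (2 * A (z, x) ^ 1 * fderiv ℝ A (z, x) (0, 1))
      + C * (2 * B (z, x) ^ 1 * fderiv ℝ B (z, x) (0, 1)) with hf'def
  have hfx : ∀ x : ℝ, Continuous (fun z => f x z) := fun x =>
    (continuous_const.mul ((hAc.comp (continuous_id.prodMk continuous_const)).pow 2)).add
      (continuous_const.mul ((hBc.comp (continuous_id.prodMk continuous_const)).pow 2))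
  have hf'c : Continuous (fun p : ℝ × ℝ => f' p.2 p.1) := by
    have : (fun p : ℝ × ℝ => f' p.2 p.1)
        = fun p => L * (2 * A p ^ 1 * fderiv ℝ A p (0, 1))
            + C * (2 * B p ^ 1 * fderiv ℝ B p (0, 1)) := by
      funext p; simp [hf'def]
    rw [this]
    exact (continuous_const.mul ((continuous_const.mul (hAc.pow 1)).mul hAτc)).add
      (continuous_const.mul ((continuous_const.mul (hBc.pow 1)).mul hBτc))
  have hf'x : ∀ x : ℝ, Continuous (fun z => f' x z) := fun x =>
    hf'c.comp (continuous_id.prodMk continuous_const)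
  have h_diff : ∀ x z : ℝ, HasDerivAt (fun x => f x z) (f' x z) x := fun x z =>
    (((pd_snd hAd z x).pow 2).const_mul L).add (((pd_snd hBd z x).pow 2).const_mul C)
  -- a uniform bound on a compact neighborhood
  obtain ⟨M, hM⟩ := (isCompact_Icc.prod (isCompact_Icc (a := t - 1) (b := t + 1))
    ).exists_bound_of_continuousOn hf'c.continuousOn
  have key := intervalIntegral.hasDerivAt_integral_of_dominated_loc_of_deriv_le
    (μ := MeasureTheory.volume) (F := f) (F' := f') (x₀ := t) (a := (0:ℝ)) (b := 1)
    (bound := fun _ => M) (s := Metric.ball t 1) (Metric.ball_mem_nhds t one_pos)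
    (Filter.Eventually.of_forall fun x => (hfx x).aestronglyMeasurable)
    ((hfx t).intervalIntegrable 0 1)
    ((hf'x t).aestronglyMeasurable)
    (Filter.Eventually.of_forall fun z hz x hx => by
      have hz' : z ∈ Set.Icc (0:ℝ) 1 := by
        rw [Set.uIoc_of_le (by norm_num : (0:ℝ) ≤ 1)] at hz
        exact ⟨hz.1.le, hz.2⟩
      have hx' : x ∈ Set.Icc (t - 1) (t + 1) := by
        rw [Metric.mem_ball, Real.dist_eq, abs_sub_lt_iff] at hx
        constructor <;> linarith [hx.1, hx.2]
      exact hM (z, x) ⟨hz', hx'⟩)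
    (intervalIntegrable_const)
    (Filter.Eventually.of_forall fun z _ x _ => h_diff x z)
  have hder : HasDerivAt (fun x => 1 / 2 * ∫ z in (0:ℝ)..1, f x z)
      (1 / 2 * ∫ z in (0:ℝ)..1, f' t z) t := key.2.const_mul (1 / 2)
  -- rewrite the goal's function
  have hfun : (fun τ => 1 / 2 * ∫ z in (0:ℝ)..1,
      (L * (deriv (i z) τ) ^ 2 + C * (deriv (v z) τ) ^ 2))
      = fun x => 1 / 2 * ∫ z in (0:ℝ)..1, f x z := by
    funext τ
    simp only [haA, hbB, hfdef]
  rw [hfun, hder.deriv]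
  -- compute the integral of f' t
  have hprod : ∀ z : ℝ, deriv (fun w => A (w, t) * B (w, t)) z
      = fderiv ℝ A (z, t) (1, 0) * B (z, t) + A (z, t) * fderiv ℝ B (z, t) (1, 0) :=
    fun z => ((pd_fst hAd z t).mul (pd_fst hBd z t)).deriv
  have hcongr : ∫ z in (0:ℝ)..1, f' t z
      = ∫ z in (0:ℝ)..1, (2 * (-(R * A (z, t) ^ 2 + G * B (z, t) ^ 2)
          - deriv (fun w => A (w, t) * B (w, t)) z)) := by
    apply intervalIntegral.integral_congr
    intro z hz
    rw [Set.uIcc_of_le (by norm_num : (0:ℝ) ≤ 1)] at hz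
    have e1 := E1 z hz t
    have e2 := E2 z hz t
    show f' t z = 2 * (-(R * A (z, t) ^ 2 + G * B (z, t) ^ 2)
      - deriv (fun w => A (w, t) * B (w, t)) z)
    rw [hprod z]
    simp only [hf'def]
    linear_combination 2 * A (z, t) * e1 + 2 * B (z, t) * e2
  rw [hcongr, intervalIntegral.integral_const_mul]
  have hg_int : IntervalIntegrable (fun z => R * A (z, t) ^ 2 + G * B (z, t) ^ 2)
      MeasureTheory.volume 0 1 :=
    ((continuous_const.mul ((hAc.comp (continuous_id.prodMk continuous_const)).pow 2)).add
      (continuous_const.mul ((hBc.comp (continuous_id.prodMk continuous_const)).pow 2))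
      ).intervalIntegrable 0 1
  have hd_eq : (fun z => deriv (fun w => A (w, t) * B (w, t)) z)
      = fun z => fderiv ℝ A (z, t) (1, 0) * B (z, t) + A (z, t) * fderiv ℝ B (z, t) (1, 0) :=
    funext hprod
  have hAzc : Continuous (fun p : ℝ × ℝ => fderiv ℝ A p ((1:ℝ), (0:ℝ))) :=
    ((hA2.fderiv_right (m := 1) (by norm_num)).clm_apply contDiff_const).continuous
  have hBzc : Continuous (fun p : ℝ × ℝ => fderiv ℝ B p ((1:ℝ), (0:ℝ))) :=
    ((hB2.fderiv_right (m := 1) (by norm_num)).clm_apply contDiff_const).continuous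
  have hd_int : IntervalIntegrable (fun z => deriv (fun w => A (w, t) * B (w, t)) z)
      MeasureTheory.volume 0 1 := by
    rw [hd_eq]
    exact (((hAzc.comp (continuous_id.prodMk continuous_const)).mul
        (hBc.comp (continuous_id.prodMk continuous_const))).add
      ((hAc.comp (continuous_id.prodMk continuous_const)).mul
        (hBzc.comp (continuous_id.prodMk continuous_const)))).intervalIntegrable 0 1
  have hsplit : ∫ z in (0:ℝ)..1, (-(R * A (z, t) ^ 2 + G * B (z, t) ^ 2)
      - deriv (fun w => A (w, t) * B (w, t)) z)
      = (∫ z in (0:ℝ)..1, -(R * A (z, t) ^ 2 + G * B (z, t) ^ 2))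
        - ∫ z in (0:ℝ)..1, deriv (fun w => A (w, t) * B (w, t)) z :=
    intervalIntegral.integral_sub hg_int.neg hd_int
  have hftc : ∫ z in (0:ℝ)..1, deriv (fun w => A (w, t) * B (w, t)) z
      = A (1, t) * B (1, t) - A (0, t) * B (0, t) := by
    apply intervalIntegral.integral_deriv_eq_sub
    · exact fun z _ => ((pd_fst hAd z t).mul (pd_fst hBd z t)).differentiableAt
    · exact hd_int
  have hneg : ∫ z in (0:ℝ)..1, -(R * A (z, t) ^ 2 + G * B (z, t) ^ 2)
      = -∫ z in (0:ℝ)..1, (R * A (z, t) ^ 2 + G * B (z, t) ^ 2) :=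
    intervalIntegral.integral_neg
  have hRHSint : ∫ z in (0:ℝ)..1,
      (R * (deriv (i z) t) ^ 2 + G * (deriv (v z) t) ^ 2)
      = ∫ z in (0:ℝ)..1, (R * A (z, t) ^ 2 + G * B (z, t) ^ 2) := by
    apply intervalIntegral.integral_congr
    intro z _
    simp only [haA, hbB]
  rw [hsplit, hftc, hneg, hRHSint, haA, haA, hbB, hbB]
  ring
end
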